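/- arXiv:1608.01115 — 8 statements merged into one kernel-verified Lean document; each statement's English description precedes it below -/
import Mathlib

section
/- Let μ > 0, β₁ > 0, γ₂ > 0, α₀, α₁, α₂, α₃ ∈ ℝ, and let Y be the truncated normal form vector field with ν = 0. Define V(x,y,z) := z² + (γ₂/(β₁+1))(x² + y²) − μ. Then the identity ∇V(x,y,z) · Y(x,y,z) = 2z · V(x,y,z) holds for all (x,y,z) ∈ ℝ³. Consequently, for every differentiable curve γ : I → ℝ³ on an interval I satisfying γ'(t) = Y(γ(t)) for all t ∈ I and V(γ(t₀)) = 0 for some t₀ ∈ I, one has V(γ(t)) = 0 for all t ∈ I; that is, the ellipsoid W₂ = { z² + (γ₂/(β₁+1))(x²+y²) = μ } is invariant under the flow of Y. -/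
/-- The truncated normal form vector field of the Hopf-zero singularity with ν = 0. -/
noncomputable def hopfY (μ β₁ γ₂ α₀ α₁ α₂ α₃ : ℝ) (p : ℝ × ℝ × ℝ) : ℝ × ℝ × ℝ :=
  (p.1 * (0 - β₁ * p.2.2) + (α₀ + α₁ * μ + α₂ * 0 + α₃ * p.2.2) * p.2.1,
   -(α₀ + α₁ * μ + α₂ * 0 + α₃ * p.2.2) * p.1 + p.2.1 * (0 - β₁ * p.2.2),
   -μ + p.2.2 ^ 2 + γ₂ * (p.1 ^ 2 + p.2.1 ^ 2))

/-- `V(x,y,z) = z² + (γ₂/(β₁+1))(x²+y²) − μ`. -/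
noncomputable def hopfV (μ β₁ γ₂ : ℝ) (p : ℝ × ℝ × ℝ) : ℝ :=
  p.2.2 ^ 2 + (γ₂ / (β₁ + 1)) * (p.1 ^ 2 + p.2.1 ^ 2) - μ

lemma hopfV_hasFDerivAt (μ β₁ γ₂ : ℝ) (p : ℝ × ℝ × ℝ) :
    HasFDerivAt (hopfV μ β₁ γ₂)
      ((((p.2.2 • (ContinuousLinearMap.snd ℝ ℝ ℝ).comp
            (ContinuousLinearMap.snd ℝ ℝ (ℝ × ℝ)) +
          p.2.2 • (ContinuousLinearMap.snd ℝ ℝ ℝ).comp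
            (ContinuousLinearMap.snd ℝ ℝ (ℝ × ℝ))) +
        (γ₂ / (β₁ + 1)) •
          ((p.1 • ContinuousLinearMap.fst ℝ ℝ (ℝ × ℝ) +
            p.1 • ContinuousLinearMap.fst ℝ ℝ (ℝ × ℝ)) +
           (p.2.1 • (ContinuousLinearMap.fst ℝ ℝ ℝ).comp
              (ContinuousLinearMap.snd ℝ ℝ (ℝ × ℝ)) +
            p.2.1 • (ContinuousLinearMap.fst ℝ ℝ ℝ).comp
              (ContinuousLinearMap.snd ℝ ℝ (ℝ × ℝ)))))) : (ℝ × ℝ × ℝ) →L[ℝ] ℝ) p := by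
  have e : hopfV μ β₁ γ₂ = fun p : ℝ × ℝ × ℝ =>
      p.2.2 * p.2.2 + (γ₂ / (β₁ + 1)) * (p.1 * p.1 + p.2.1 * p.2.1) - μ := by
    funext p; simp [hopfV]; ring
  rw [e]
  have h1 : HasFDerivAt (fun p : ℝ × ℝ × ℝ => p.1)
      (ContinuousLinearMap.fst ℝ ℝ (ℝ × ℝ)) p := hasFDerivAt_fst
  have h2 : HasFDerivAt (fun p : ℝ × ℝ × ℝ => p.2.1)
      ((ContinuousLinearMap.fst ℝ ℝ ℝ).comp (ContinuousLinearMap.snd ℝ ℝ (ℝ × ℝ))) p :=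
    hasFDerivAt_fst.comp p hasFDerivAt_snd
  have h3 : HasFDerivAt (fun p : ℝ × ℝ × ℝ => p.2.2)
      ((ContinuousLinearMap.snd ℝ ℝ ℝ).comp (ContinuousLinearMap.snd ℝ ℝ (ℝ × ℝ))) p :=
    hasFDerivAt_snd.comp p hasFDerivAt_snd
  exact ((h3.mul h3).add (((h1.mul h1).add (h2.mul h2)).const_mul (γ₂ / (β₁ + 1)))).sub_const μ

lemma hopfV_fderiv_apply (μ β₁ γ₂ : ℝ) (p v : ℝ × ℝ × ℝ) :
    fderiv ℝ (hopfV μ β₁ γ₂) p v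
      = 2 * p.2.2 * v.2.2 + (γ₂ / (β₁ + 1)) * (2 * p.1 * v.1 + 2 * p.2.1 * v.2.1) := by
  rw [(hopfV_hasFDerivAt μ β₁ γ₂ p).fderiv]
  simp [ContinuousLinearMap.add_apply, ContinuousLinearMap.smul_apply]
  ring

theorem stmt1 (μ β₁ γ₂ α₀ α₁ α₂ α₃ : ℝ) (hμ : 0 < μ) (hβ : 0 < β₁) (hγ : 0 < γ₂) :
    (∀ p : ℝ × ℝ × ℝ,
      fderiv ℝ (hopfV μ β₁ γ₂) p (hopfY μ β₁ γ₂ α₀ α₁ α₂ α₃ p)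
        = 2 * p.2.2 * hopfV μ β₁ γ₂ p) ∧
    (∀ I : Set ℝ, I.OrdConnected → ∀ γ : ℝ → ℝ × ℝ × ℝ,
      (∀ t ∈ I, HasDerivAt γ (hopfY μ β₁ γ₂ α₀ α₁ α₂ α₃ (γ t)) t) →
      ∀ t₀ ∈ I, hopfV μ β₁ γ₂ (γ t₀) = 0 →
      ∀ t ∈ I, hopfV μ β₁ γ₂ (γ t) = 0) := by
  have hβ1 : β₁ + 1 ≠ 0 := by positivity
  have key : ∀ p : ℝ × ℝ × ℝ,
      fderiv ℝ (hopfV μ β₁ γ₂) p (hopfY μ β₁ γ₂ α₀ α₁ α₂ α₃ p)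
        = 2 * p.2.2 * hopfV μ β₁ γ₂ p := by
    intro p
    rw [hopfV_fderiv_apply]
    simp only [hopfY, hopfV]
    field_simp
    ring
  refine ⟨key, ?_⟩
  intro I hI γ hγ t₀ ht₀ hV0 t ht
  -- derivative of V along the curve
  set w : ℝ → ℝ := fun s => hopfV μ β₁ γ₂ (γ s) with hw
  have hw' : ∀ s ∈ I, HasDerivAt w (2 * (γ s).2.2 * w s) s := by
    intro s hs
    have := (hopfV_hasFDerivAt μ β₁ γ₂ (γ s)).comp_hasDerivAt s (hγ s hs)
    rwa [← (hopfV_hasFDerivAt μ β₁ γ₂ (γ s)).fderiv, key (γ s)] at this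
  -- Grönwall on a compact subinterval [a,b] ⊆ I
  have main : ∀ a b : ℝ, a ∈ I → b ∈ I → a ≤ b → w a = 0 → ∀ x ∈ Set.Icc a b, w x = 0 := by
    intro a b haI hbI hab hwa x hx
    have hIcc : Set.Icc a b ⊆ I := hI.out haI hbI
    have hzc : ContinuousOn (fun s => |2 * (γ s).2.2|) (Set.Icc a b) := by
      apply ContinuousOn.abs
      apply Continuous.continuousOn (continuous_const) |>.mul ?_
      exact fun s hs => ((hγ s (hIcc hs)).continuousAt.snd.snd).continuousWithinAt
    obtain ⟨K, hK⟩ : ∃ K, ∀ s ∈ Set.Icc a b, |2 * (γ s).2.2| ≤ K := by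
      rcases isCompact_Icc.exists_bound_of_continuousOn hzc with ⟨C, hC⟩
      exact ⟨C, fun s hs => (le_abs_self _).trans (hC s hs)⟩
    have hcont : ContinuousOn w (Set.Icc a b) :=
      fun s hs => ((hw' s (hIcc hs)).continuousAt).continuousWithinAt
    have hder : ∀ s ∈ Set.Ico a b, HasDerivWithinAt w (2 * (γ s).2.2 * w s) (Set.Ici s) s :=
      fun s hs => (hw' s (hIcc (Set.Ico_subset_Icc_self hs))).hasDerivWithinAt
    have hbound : ∀ s ∈ Set.Ico a b, ‖2 * (γ s).2.2 * w s‖ ≤ K * ‖w s‖ + 0 := by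
      intro s hs
      rw [add_zero, Real.norm_eq_abs, abs_mul, Real.norm_eq_abs]
      exact mul_le_mul_of_nonneg_right (hK s (Set.Ico_subset_Icc_self hs)) (abs_nonneg _)
    have := norm_le_gronwallBound_of_norm_deriv_right_le (δ := 0) hcont hder
      (by simp [hwa]) hbound x hx
    rw [gronwallBound_ε0, zero_mul] at this
    have : ‖w x‖ ≤ 0 := this
    simpa using le_antisymm this (norm_nonneg _)
  rcases le_total t₀ t with h | h
  · exact main t₀ t ht₀ ht h hV0 t ⟨h, le_rfl⟩
  · -- time-reversed curve on [t, t₀]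
    set σ : ℝ → ℝ := fun s => t + t₀ - s with hσ
    have hσmem : ∀ s ∈ Set.Icc t t₀, σ s ∈ Set.Icc t t₀ := by
      intro s hs
      constructor <;> simp [hσ] <;> linarith [hs.1, hs.2]
    have hIcc : Set.Icc t t₀ ⊆ I := hI.out ht ht₀
    -- apply main to w ∘ σ
    have main2 : ∀ x ∈ Set.Icc t t₀, w (σ x) = 0 := by
      intro x hx
      -- instead of reusing `main`, redo Grönwall for w ∘ σ
      have hzc : ContinuousOn (fun s => |2 * (γ (σ s)).2.2|) (Set.Icc t t₀) := by
        apply ContinuousOn.abs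
        apply Continuous.continuousOn (continuous_const) |>.mul ?_
        intro s hs
        have : ContinuousAt γ (σ s) := (hγ (σ s) (hIcc (hσmem s hs))).continuousAt
        exact ((this.snd.snd).comp (by fun_prop : ContinuousAt σ s)).continuousWithinAt
      obtain ⟨K, hK⟩ : ∃ K, ∀ s ∈ Set.Icc t t₀, |2 * (γ (σ s)).2.2| ≤ K := by
        rcases isCompact_Icc.exists_bound_of_continuousOn hzc with ⟨C, hC⟩
        exact ⟨C, fun s hs => (le_abs_self _).trans (hC s hs)⟩
      have hwσ' : ∀ s ∈ Set.Icc t t₀,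
          HasDerivAt (fun s => w (σ s)) (-(2 * (γ (σ s)).2.2 * w (σ s))) s := by
        intro s hs
        have h1 := hw' (σ s) (hIcc (hσmem s hs))
        have h2 : HasDerivAt σ (-1) s := by
          simpa using (hasDerivAt_id s).const_sub (t + t₀)
        have := h1.comp s h2
        simpa [mul_comm, mul_neg, Function.comp_def] using this
      have hcont : ContinuousOn (fun s => w (σ s)) (Set.Icc t t₀) :=
        fun s hs => ((hwσ' s hs).continuousAt).continuousWithinAt
      have hder : ∀ s ∈ Set.Ico t t₀,
          HasDerivWithinAt (fun s => w (σ s)) (-(2 * (γ (σ s)).2.2 * w (σ s))) (Set.Ici s) s :=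
        fun s hs => (hwσ' s (Set.Ico_subset_Icc_self hs)).hasDerivWithinAt
      have hbound : ∀ s ∈ Set.Ico t t₀,
          ‖-(2 * (γ (σ s)).2.2 * w (σ s))‖ ≤ K * ‖w (σ s)‖ + 0 := by
        intro s hs
        rw [add_zero, norm_neg, Real.norm_eq_abs, abs_mul, Real.norm_eq_abs]
        exact mul_le_mul_of_nonneg_right (hK s (Set.Ico_subset_Icc_self hs)) (abs_nonneg _)
      have h0 : ‖w (σ t)‖ ≤ 0 := by simp [hσ, hV0, hw]
      have := norm_le_gronwallBound_of_norm_deriv_right_le hcont hder h0 hbound x hx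
      rw [gronwallBound_ε0, zero_mul] at this
      simpa using le_antisymm this (norm_nonneg _)
    have := main2 t₀ ⟨h, le_rfl⟩
    simpa [hσ] using this
end

section
/- Let α, δ, d > 0, c ∈ ℝ and l ∈ ℤ. Let φ : ℝ → ℂ be continuous and such that w ↦ φ(w)/cosh(d w)^{2/d} is integrable on (−∞, v] for every v ∈ ℝ. Define y(v) := cosh(d v)^{2/d} · ∫_{−∞}^{v} e^{−i l (η(w) − η(v))/δ} · φ(w) · cosh(d w)^{−2/d} dw. Then y is differentiable on ℝ and satisfies, for every v ∈ ℝ, the l-th Fourier-mode equation i l·(−α/δ − c·tanh(d v))·y(v) + y'(v) − 2·tanh(d v)·y(v) = φ(v). (This expresses that the integral operator 𝒢ᵘ is a right inverse of the linear operator ℒ(r) = (−α/δ − c Z₀(u)) ∂_θ r + ∂_u r − 2 Z₀(u) r, mode by mode, with Z₀(u) = tanh(d u).) -/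
open MeasureTheory

/-- η(w) = αw + (δc/d)·log(cosh(dw)). -/
noncomputable def etaF (α δ c d : ℝ) (w : ℝ) : ℝ :=
  α * w + (δ * c / d) * Real.log (Real.cosh (d * w))

/-- The `l`-th Fourier mode of the right inverse 𝒢ᵘ applied to `φ`. -/
noncomputable def Gmode (α δ c d : ℝ) (l : ℤ) (φ : ℝ → ℂ) (v : ℝ) : ℂ :=
  (Real.cosh (d * v) ^ ((2 : ℝ) / d)) •
    ∫ w in Set.Iic v,
      Complex.exp (-Complex.I * (l : ℂ) * (((etaF α δ c d w - etaF α δ c d v) / δ : ℝ) : ℂ))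
        * φ w / ((Real.cosh (d * w) ^ ((2 : ℝ) / d) : ℝ) : ℂ)

/-- The prefactor `cosh(dv)^{2/d} · exp(i l η(v)/δ)`. -/
noncomputable def cFun (α δ c d : ℝ) (l : ℤ) (v : ℝ) : ℂ :=
  ((Real.cosh (d * v) ^ ((2 : ℝ) / d) : ℝ) : ℂ) *
    Complex.exp (Complex.I * (l : ℂ) * ((etaF α δ c d v / δ : ℝ) : ℂ))

/-- The integrand `exp(-i l η(w)/δ) φ(w) / cosh(dw)^{2/d}`. -/
noncomputable def gFun (α δ c d : ℝ) (l : ℤ) (φ : ℝ → ℂ) (w : ℝ) : ℂ :=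
  Complex.exp (-Complex.I * (l : ℂ) * ((etaF α δ c d w / δ : ℝ) : ℂ)) * φ w /
    ((Real.cosh (d * w) ^ ((2 : ℝ) / d) : ℝ) : ℂ)

lemma Gmode_eq (α δ c d : ℝ) (l : ℤ) (φ : ℝ → ℂ) :
    Gmode α δ c d l φ = fun v => cFun α δ c d l v * ∫ w in Set.Iic v, gFun α δ c d l φ w := by
  funext v
  unfold Gmode cFun gFun
  rw [Complex.real_smul]
  have h : ∀ w : ℝ,
      Complex.exp (-Complex.I * (l : ℂ) * (((etaF α δ c d w - etaF α δ c d v) / δ : ℝ) : ℂ))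
        * φ w / ((Real.cosh (d * w) ^ ((2 : ℝ) / d) : ℝ) : ℂ)
      = Complex.exp (Complex.I * (l : ℂ) * ((etaF α δ c d v / δ : ℝ) : ℂ)) *
        (Complex.exp (-Complex.I * (l : ℂ) * ((etaF α δ c d w / δ : ℝ) : ℂ)) * φ w /
          ((Real.cosh (d * w) ^ ((2 : ℝ) / d) : ℝ) : ℂ)) := by
    intro w
    rw [show (-Complex.I * (l : ℂ) * (((etaF α δ c d w - etaF α δ c d v) / δ : ℝ) : ℂ))
        = Complex.I * (l : ℂ) * ((etaF α δ c d v / δ : ℝ) : ℂ)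
          + -Complex.I * (l : ℂ) * ((etaF α δ c d w / δ : ℝ) : ℂ) by push_cast; ring,
      Complex.exp_add]
    ring
  simp_rw [h, integral_const_mul]
  ring

theorem stmt4 (α δ d c : ℝ) (hα : 0 < α) (hδ : 0 < δ) (hd : 0 < d) (l : ℤ)
    (φ : ℝ → ℂ) (hφ : Continuous φ)
    (hint : ∀ v : ℝ, IntegrableOn
      (fun w : ℝ => φ w / ((Real.cosh (d * w) ^ ((2 : ℝ) / d) : ℝ) : ℂ)) (Set.Iic v)) :
    ∀ v : ℝ,
      DifferentiableAt ℝ (Gmode α δ c d l φ) v ∧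
      Complex.I * (l : ℂ) * ((-(α / δ) - c * Real.tanh (d * v) : ℝ) : ℂ)
          * Gmode α δ c d l φ v
        + deriv (Gmode α δ c d l φ) v
        - 2 * ((Real.tanh (d * v) : ℝ) : ℂ) * Gmode α δ c d l φ v = φ v := by
  intro v
  set g : ℝ → ℂ := gFun α δ c d l φ with hg_def
  -- continuity facts
  have hcont_cosh : Continuous fun w : ℝ => Real.cosh (d * w) ^ ((2 : ℝ) / d) :=
    (Real.continuous_cosh.comp (continuous_const.mul continuous_id)).rpow_const
      (fun w => Or.inl (Real.cosh_pos _).ne')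
  have hcont_eta : Continuous (etaF α δ c d) := by
    unfold etaF
    exact (continuous_const.mul continuous_id).add (continuous_const.mul
      ((Real.continuous_cosh.comp (continuous_const.mul continuous_id)).log
        (fun w => (Real.cosh_pos _).ne')))
  have hcont_exp : Continuous fun w : ℝ =>
      Complex.exp (-Complex.I * (l : ℂ) * ((etaF α δ c d w / δ : ℝ) : ℂ)) :=
    Complex.continuous_exp.comp (continuous_const.mul
      (Complex.continuous_ofReal.comp (hcont_eta.div_const δ)))
  have hKpos : ∀ w : ℝ, (0 : ℝ) < Real.cosh (d * w) ^ ((2 : ℝ) / d) :=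
    fun w => Real.rpow_pos_of_pos (Real.cosh_pos _) _
  have hKne : ∀ w : ℝ, ((Real.cosh (d * w) ^ ((2 : ℝ) / d) : ℝ) : ℂ) ≠ 0 :=
    fun w => Complex.ofReal_ne_zero.mpr (hKpos w).ne'
  have hcont_g : Continuous g := by
    rw [hg_def]
    unfold gFun
    exact (hcont_exp.mul hφ).div (Complex.continuous_ofReal.comp hcont_cosh) hKne
  -- integrability of g on every Iic
  have hint_g : ∀ u : ℝ, IntegrableOn g (Set.Iic u) := by
    intro u
    have h := (hint u).bdd_mul (hcont_exp.aestronglyMeasurable.restrict)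
      (c := 1) (Filter.Eventually.of_forall fun w => by
        simp only [neg_mul]
        rw [show -(Complex.I * (l : ℂ) * ((etaF α δ c d w / δ : ℝ) : ℂ))
            = ((-(l * (etaF α δ c d w / δ)) : ℝ) : ℂ) * Complex.I by push_cast; ring]
        rw [Complex.norm_exp_ofReal_mul_I])
    have : (fun w : ℝ => Complex.exp (-Complex.I * (l : ℂ) * ((etaF α δ c d w / δ : ℝ) : ℂ)) *
        (φ w / ((Real.cosh (d * w) ^ ((2 : ℝ) / d) : ℝ) : ℂ))) = g := by
      funext w; rw [hg_def]; unfold gFun; ring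
    rwa [this] at h
  -- derivative of the integral
  set F : ℝ → ℂ := fun u => ∫ w in Set.Iic u, g w with hF_def
  have hFd : HasDerivAt F (g v) v := by
    have hF : ∀ u : ℝ, F u = F 0 + ∫ w in (0:ℝ)..u, g w := by
      intro u
      rw [← intervalIntegral.integral_Iic_sub_Iic (hint_g 0) (hint_g u)]
      ring
    have h1 : HasDerivAt (fun u => F 0 + ∫ w in (0:ℝ)..u, g w) (g v) v :=
      (intervalIntegral.integral_hasDerivAt_right
        (hcont_g.intervalIntegrable 0 v)
        (hcont_g.stronglyMeasurableAtFilter _ _)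
        hcont_g.continuousAt).const_add (F 0)
    exact h1.congr_of_eventuallyEq (Filter.Eventually.of_forall hF)
  -- derivative of the prefactor
  have h1 : HasDerivAt (fun u : ℝ => d * u) d v := by simpa using (hasDerivAt_id v).const_mul d
  have h2 : HasDerivAt (fun u : ℝ => Real.cosh (d * u)) (Real.sinh (d * v) * d) v :=
    (Real.hasDerivAt_cosh (d * v)).comp v h1
  have hcoshd : HasDerivAt (fun u : ℝ => Real.cosh (d * u) ^ ((2 : ℝ) / d))
      (2 * Real.tanh (d * v) * Real.cosh (d * v) ^ ((2 : ℝ) / d)) v := by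
    have h3 := (Real.hasDerivAt_rpow_const (x := Real.cosh (d * v)) (p := (2 : ℝ) / d)
      (Or.inl (Real.cosh_pos _).ne')).comp v h2
    refine h3.congr_deriv (Eq.symm ?_)
    rw [Real.tanh_eq_sinh_div_cosh, Real.rpow_sub (Real.cosh_pos _), Real.rpow_one]
    field_simp
  have hetad : HasDerivAt (etaF α δ c d) (α + δ * c * Real.tanh (d * v)) v := by
    unfold etaF
    have h3 : HasDerivAt (fun u : ℝ => Real.log (Real.cosh (d * u)))
        ((Real.sinh (d * v) * d) / Real.cosh (d * v)) v := h2.log (Real.cosh_pos _).ne'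
    have h4 := ((hasDerivAt_id v).const_mul α).add (h3.const_mul (δ * c / d))
    refine h4.congr_deriv (Eq.symm ?_)
    rw [Real.tanh_eq_sinh_div_cosh]
    field_simp
  have hexpd : HasDerivAt
      (fun u : ℝ => Complex.exp (Complex.I * (l : ℂ) * ((etaF α δ c d u / δ : ℝ) : ℂ)))
      (Complex.exp (Complex.I * (l : ℂ) * ((etaF α δ c d v / δ : ℝ) : ℂ)) *
        (Complex.I * (l : ℂ) * (((α + δ * c * Real.tanh (d * v)) / δ : ℝ) : ℂ))) v := by
    have h0 : HasDerivAt (fun u : ℝ => ((etaF α δ c d u / δ : ℝ) : ℂ))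
        ((((α + δ * c * Real.tanh (d * v)) / δ : ℝ)) : ℂ) v :=
      (hetad.div_const δ).ofReal_comp
    exact (h0.const_mul (Complex.I * (l : ℂ))).cexp
  have hcd : HasDerivAt (cFun α δ c d l)
      (((2 * Real.tanh (d * v) * Real.cosh (d * v) ^ ((2 : ℝ) / d) : ℝ) : ℂ) *
        Complex.exp (Complex.I * (l : ℂ) * ((etaF α δ c d v / δ : ℝ) : ℂ))
      + ((Real.cosh (d * v) ^ ((2 : ℝ) / d) : ℝ) : ℂ) *
        (Complex.exp (Complex.I * (l : ℂ) * ((etaF α δ c d v / δ : ℝ) : ℂ)) *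
          (Complex.I * (l : ℂ) * (((α + δ * c * Real.tanh (d * v)) / δ : ℝ) : ℂ)))) v := by
    unfold cFun
    exact (hcoshd.ofReal_comp).mul hexpd
  -- derivative of Gmode
  have hGd : HasDerivAt (Gmode α δ c d l φ)
      ((((2 * Real.tanh (d * v) * Real.cosh (d * v) ^ ((2 : ℝ) / d) : ℝ) : ℂ) *
        Complex.exp (Complex.I * (l : ℂ) * ((etaF α δ c d v / δ : ℝ) : ℂ))
      + ((Real.cosh (d * v) ^ ((2 : ℝ) / d) : ℝ) : ℂ) *
        (Complex.exp (Complex.I * (l : ℂ) * ((etaF α δ c d v / δ : ℝ) : ℂ)) *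
          (Complex.I * (l : ℂ) * (((α + δ * c * Real.tanh (d * v)) / δ : ℝ) : ℂ)))) * F v
        + cFun α δ c d l v * g v) v := by
    rw [Gmode_eq]
    exact hcd.mul hFd
  have hcg : cFun α δ c d l v * g v = φ v := by
    rw [hg_def]
    unfold cFun gFun
    simp only [neg_mul, Complex.exp_neg]
    rw [show ∀ (K E p : ℂ), K * E * (E⁻¹ * p / K) = E * E⁻¹ * (K * K⁻¹) * p from
      fun K E p => by ring, mul_inv_cancel₀ (Complex.exp_ne_zero _),
      mul_inv_cancel₀ (hKne v), one_mul, one_mul]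
  have hGv : Gmode α δ c d l φ v = cFun α δ c d l v * F v := by
    rw [Gmode_eq]
  refine ⟨hGd.differentiableAt, ?_⟩
  rw [hGd.deriv, hGv, hcg]
  unfold cFun
  have hδ' : ((δ : ℂ)) ≠ 0 := Complex.ofReal_ne_zero.mpr hδ.ne'
  push_cast
  field_simp
  ring
end

section
/- Let α, d, δ > 0, C ∈ ℝ, l ∈ ℤ with l ≠ 0, n ∈ ℕ with n ≥ 1, and Q ∈ ℝ with Q > 0 and Q + 1 > n. Then the recurrence I_{n,Q}^{l,C} = (−i |l| α / (d δ (Q + i C |l|))) · I_{n−1,Q−1}^{l,C} + ((n−1)/(Q + i C |l|)) · I_{n−2,Q−2}^{l,C} holds; when n = 1 the second term vanishes since its coefficient is n − 1 = 0. -/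
open MeasureTheory Set Filter

/-- I_{n,Q}^{l,C} = ∫ e^{−iα|l|s/δ} sinh(ds)^n / cosh(ds)^{Q+1+iC|l|} ds. -/
noncomputable def Iint (α d δ C : ℝ) (l : ℤ) (n : ℕ) (Q : ℝ) : ℂ :=
  ∫ s : ℝ,
    Complex.exp (-(Complex.I * (α : ℂ) * ((|l| : ℤ) : ℂ) * (s : ℂ)) / (δ : ℂ))
      * ((Real.sinh (d * s) : ℝ) : ℂ) ^ n
      / ((Real.cosh (d * s) : ℂ) ^ (((Q : ℂ) + 1) + Complex.I * (C : ℂ) * ((|l| : ℤ) : ℂ)))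

noncomputable def itd (α d δ C : ℝ) (l : ℤ) (k : ℕ) (P : ℝ) (s : ℝ) : ℂ :=
  Complex.exp (-(Complex.I * (α : ℂ) * ((|l| : ℤ) : ℂ) * (s : ℂ)) / (δ : ℂ))
    * ((Real.sinh (d * s) : ℝ) : ℂ) ^ k
    / ((Real.cosh (d * s) : ℂ) ^ (((P : ℂ) + 1) + Complex.I * (C : ℂ) * ((|l| : ℤ) : ℂ)))

lemma Iint_eq (α d δ C : ℝ) (l : ℤ) (k : ℕ) (P : ℝ) :
    Iint α d δ C l k P = ∫ s : ℝ, itd α d δ C l k P s := rfl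

lemma itd_norm (α d δ C : ℝ) (l : ℤ) (k : ℕ) (P : ℝ) (s : ℝ) :
    ‖itd α d δ C l k P s‖
      = |Real.sinh (d * s)| ^ k / Real.cosh (d * s) ^ (P + 1) := by
  unfold itd
  have hofr : ((|l| : ℤ) : ℂ) = (((|l| : ℤ) : ℝ) : ℂ) := by norm_cast
  have hexp : ‖Complex.exp (-(Complex.I * (α : ℂ) * ((|l| : ℤ) : ℂ) * (s : ℂ)) / (δ : ℂ))‖
      = 1 := by
    rw [show -(Complex.I * (α : ℂ) * ((|l| : ℤ) : ℂ) * (s : ℂ)) / (δ : ℂ)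
          = ((-(α * ((|l| : ℤ) : ℝ) * s) / δ : ℝ) : ℂ) * Complex.I by
        rw [hofr]; push_cast; ring,
      Complex.norm_exp_ofReal_mul_I]
  rw [norm_div, norm_mul, hexp, one_mul, norm_pow, Complex.norm_real, Real.norm_eq_abs,
    Complex.norm_cpow_eq_rpow_re_of_pos (Real.cosh_pos (d * s))]
  congr 1
  simp

lemma exp_abs_integrable {b : ℝ} (hb : 0 < b) :
    Integrable (fun s : ℝ => Real.exp (-(b * |s|))) := by
  have hIoi : IntegrableOn (fun s : ℝ => Real.exp (-(b * |s|))) (Ioi 0) := by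
    refine ((exp_neg_integrableOn_Ioi 0 hb).congr_fun (fun x hx => ?_) measurableSet_Ioi)
    rw [abs_of_pos hx]; beta_reduce; rw [neg_mul]
  have hIic : IntegrableOn (fun s : ℝ => Real.exp (-(b * |s|))) (Iic 0) := by
    rw [← Measure.map_neg_eq_self (volume : Measure ℝ)]
    have m : MeasurableEmbedding fun x : ℝ => -x :=
      (Homeomorph.neg ℝ).measurableEmbedding
    rw [m.integrableOn_map_iff]
    simp_rw [Function.comp_def, abs_neg, neg_preimage, neg_Iic, neg_zero]
    exact Iff.mpr integrableOn_Ici_iff_integrableOn_Ioi hIoi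
  rw [← integrableOn_univ, ← Set.Iic_union_Ioi (a := (0 : ℝ))]
  exact hIic.union hIoi

lemma itd_le (α δ C : ℝ) {d : ℝ} (hd : 0 < d) (l : ℤ) (k : ℕ) {P : ℝ}
    (hkP : (k : ℝ) < P + 1) (s : ℝ) :
    ‖itd α d δ C l k P s‖
      ≤ 2 ^ (P + 1 - k) * Real.exp (-((P + 1 - k) * d * |s|)) := by
  rw [itd_norm]
  have hc0 : 0 < Real.cosh (d * s) := Real.cosh_pos _
  have hsh : |Real.sinh (d * s)| ≤ Real.cosh (d * s) := by
    rw [Real.abs_sinh, ← Real.cosh_abs]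
    exact (Real.sinh_lt_cosh _).le
  have hcexp : Real.exp (d * |s|) / 2 ≤ Real.cosh (d * s) := by
    have h1 : Real.exp |d * s| ≤ Real.exp (d * s) + Real.exp (-(d * s)) :=
      Real.exp_abs_le _
    rw [abs_mul, abs_of_pos hd] at h1
    rw [Real.cosh_eq]
    linarith
  have hexp2 : 0 < Real.exp (d * |s|) / 2 := by positivity
  calc |Real.sinh (d * s)| ^ k / Real.cosh (d * s) ^ (P + 1)
      ≤ Real.cosh (d * s) ^ k / Real.cosh (d * s) ^ (P + 1) := by
        gcongr
    _ = Real.cosh (d * s) ^ ((k : ℝ) - (P + 1)) := by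
        rw [← Real.rpow_natCast (Real.cosh (d * s)) k, ← Real.rpow_sub hc0]
    _ ≤ (Real.exp (d * |s|) / 2) ^ ((k : ℝ) - (P + 1)) :=
        Real.rpow_le_rpow_of_nonpos hexp2 hcexp (by linarith)
    _ = 2 ^ (P + 1 - k) * Real.exp (-((P + 1 - k) * d * |s|)) := by
        rw [Real.div_rpow (Real.exp_pos _).le (by norm_num : (0:ℝ) ≤ 2),
          Real.rpow_def_of_pos (Real.exp_pos _), Real.log_exp,
          show d * |s| * ((k : ℝ) - (P + 1)) = -((P + 1 - k) * d * |s|) by ring,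
          show (k : ℝ) - (P + 1) = -(P + 1 - (k : ℝ)) by ring,
          Real.rpow_neg (by norm_num : (0:ℝ) ≤ 2),
          div_eq_mul_inv, inv_inv, mul_comm]

lemma itd_continuous (α d δ C : ℝ) (l : ℤ) (k : ℕ) (P : ℝ) :
    Continuous (itd α d δ C l k P) := by
  unfold itd
  have hne : ∀ s : ℝ, ((Real.cosh (d * s) : ℂ)) ≠ 0 := fun s => by
    exact_mod_cast (Real.cosh_pos (d * s)).ne'
  have hcd : (fun s : ℝ => ((Real.cosh (d * s) : ℂ)
        ^ (((P : ℂ) + 1) + Complex.I * (C : ℂ) * ((|l| : ℤ) : ℂ))))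
      = fun s => Complex.exp (Complex.log ((Real.cosh (d * s) : ℂ))
        * (((P : ℂ) + 1) + Complex.I * (C : ℂ) * ((|l| : ℤ) : ℂ))) :=
    funext fun s => Complex.cpow_def_of_ne_zero (hne s) _
  refine Continuous.div ?_ ?_ ?_
  · apply Continuous.mul
    · exact Complex.continuous_exp.comp (by fun_prop)
    · fun_prop
  · rw [hcd]
    apply Complex.continuous_exp.comp
    apply Continuous.mul _ continuous_const
    apply Continuous.clog (by fun_prop)
    intro s
    rw [Complex.mem_slitPlane_iff]
    left
    simp only [Complex.ofReal_re]
    exact Real.cosh_pos (d * s)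
  · intro s
    rw [Complex.cpow_def_of_ne_zero (hne s)]
    exact Complex.exp_ne_zero _

lemma itd_integrable (α δ C : ℝ) {d : ℝ} (hd : 0 < d) (l : ℤ) (k : ℕ) {P : ℝ}
    (hkP : (k : ℝ) < P + 1) : Integrable (itd α d δ C l k P) := by
  have hb : 0 < (P + 1 - k) * d := mul_pos (by linarith) hd
  refine ((exp_abs_integrable hb).const_mul (2 ^ (P + 1 - (k : ℝ)))).mono'
    (itd_continuous α d δ C l k P).aestronglyMeasurable
    (Filter.Eventually.of_forall fun s => ?_)
  have h := itd_le α δ C hd l k hkP s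
  calc ‖itd α d δ C l k P s‖ ≤ 2 ^ (P + 1 - k) * Real.exp (-((P + 1 - k) * d * |s|)) := h
    _ = 2 ^ (P + 1 - (k : ℝ)) * Real.exp (-((P + 1 - (k : ℝ)) * d * |s|)) := by norm_num

lemma itd_tendsto_top (α δ C : ℝ) {d : ℝ} (hd : 0 < d) (l : ℤ) (k : ℕ) {P : ℝ}
    (hkP : (k : ℝ) < P + 1) :
    Tendsto (itd α d δ C l k P) atTop (nhds 0) := by
  apply squeeze_zero_norm (itd_le α δ C hd l k hkP)
  have hb : 0 < (P + 1 - k) * d := mul_pos (by linarith) hd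
  have h1 : Tendsto (fun s : ℝ => (P + 1 - k) * d * |s|) atTop atTop :=
    tendsto_abs_atTop_atTop.const_mul_atTop hb
  have h2 : Tendsto (fun s : ℝ => -((P + 1 - k) * d * |s|)) atTop atBot :=
    tendsto_neg_atTop_atBot.comp h1
  have h3 : Tendsto (fun s : ℝ => Real.exp (-((P + 1 - k) * d * |s|))) atTop (nhds 0) :=
    Real.tendsto_exp_atBot.comp h2
  simpa using h3.const_mul ((2 : ℝ) ^ (P + 1 - (k : ℝ)))

lemma itd_tendsto_bot (α δ C : ℝ) {d : ℝ} (hd : 0 < d) (l : ℤ) (k : ℕ) {P : ℝ}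
    (hkP : (k : ℝ) < P + 1) :
    Tendsto (itd α d δ C l k P) atBot (nhds 0) := by
  apply squeeze_zero_norm (itd_le α δ C hd l k hkP)
  have hb : 0 < (P + 1 - k) * d := mul_pos (by linarith) hd
  have h1 : Tendsto (fun s : ℝ => (P + 1 - k) * d * |s|) atBot atTop :=
    tendsto_abs_atBot_atTop.const_mul_atTop hb
  have h2 : Tendsto (fun s : ℝ => -((P + 1 - k) * d * |s|)) atBot atBot :=
    tendsto_neg_atTop_atBot.comp h1
  have h3 : Tendsto (fun s : ℝ => Real.exp (-((P + 1 - k) * d * |s|))) atBot (nhds 0) :=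
    Real.tendsto_exp_atBot.comp h2
  simpa using h3.const_mul ((2 : ℝ) ^ (P + 1 - (k : ℝ)))

lemma itd_hasDeriv (α δ C : ℝ) {d : ℝ} (hd : 0 < d) (l : ℤ) {n : ℕ} (hn : 1 ≤ n)
    (Q : ℝ) (s : ℝ) :
    HasDerivAt (itd α d δ C l (n - 1) (Q - 1))
      ((-(Complex.I * (α : ℂ) * ((|l| : ℤ) : ℂ)) / (δ : ℂ))
          * itd α d δ C l (n - 1) (Q - 1) s
        + ((d : ℂ) * ((n : ℂ) - 1)) * itd α d δ C l (n - 2) (Q - 2) s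
        + (-(((Q : ℂ) + Complex.I * (C : ℂ) * ((|l| : ℤ) : ℂ)) * (d : ℂ)))
          * itd α d δ C l n Q s) s := by
  obtain ⟨m, rfl⟩ : ∃ m, n = m + 1 := ⟨n - 1, by omega⟩
  have hm1 : m + 1 - 1 = m := by omega
  have hm2 : m + 1 - 2 = m - 1 := by omega
  rw [hm1, hm2]
  set L : ℂ := ((|l| : ℤ) : ℂ) with hL
  set w : ℂ := (Q : ℂ) + Complex.I * (C : ℂ) * L with hw
  set c₀ : ℂ := -(Complex.I * (α : ℂ) * L) / (δ : ℂ) with hc₀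
  have hx : ∀ t : ℝ, ((Real.cosh (d * t) : ℂ)) ≠ 0 := fun t => by
    exact_mod_cast (Real.cosh_pos (d * t)).ne'
  have hfun : itd α d δ C l m (Q - 1)
      = fun t : ℝ => Complex.exp (c₀ * (t : ℂ)) * ((Real.sinh (d * t) : ℂ)) ^ m
          * ((Real.cosh (d * t) : ℂ)) ^ (-w) := by
    funext t
    unfold itd
    rw [Complex.cpow_neg, div_eq_mul_inv]
    have h1 : -(Complex.I * (α : ℂ) * L * (t : ℂ)) / (δ : ℂ) = c₀ * (t : ℂ) := by
      rw [hc₀]; ring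
    have h2 : (((Q - 1 : ℝ) : ℂ) + 1) + Complex.I * (C : ℂ) * L = w := by
      rw [hw]; push_cast; ring
    rw [h1, h2]
  have hdt : HasDerivAt (fun t : ℝ => d * t) d s := by
    simpa using (hasDerivAt_id s).const_mul d
  have hsinh : HasDerivAt (fun t : ℝ => Real.sinh (d * t)) (Real.cosh (d * s) * d) s :=
    (Real.hasDerivAt_sinh (d * s)).comp s hdt
  have hcosh : HasDerivAt (fun t : ℝ => Real.cosh (d * t)) (Real.sinh (d * s) * d) s :=
    (Real.hasDerivAt_cosh (d * s)).comp s hdt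
  have hS : HasDerivAt (fun t : ℝ => ((Real.sinh (d * t) : ℂ)) ^ m)
      ((((m : ℕ) : ℂ) * ((Real.sinh (d * s) : ℂ)) ^ (m - 1))
        * ((Real.cosh (d * s) * d : ℝ) : ℂ)) s := by
    have h := (hasDerivAt_pow m ((Real.sinh (d * s) : ℝ) : ℂ)).comp s hsinh.ofReal_comp
    simpa [Function.comp_def] using h
  have hX : HasDerivAt (fun t : ℝ => ((Real.cosh (d * t) : ℂ)) ^ (-w))
      (((-w) * ((Real.cosh (d * s) : ℂ)) ^ (-w - 1)) * ((Real.sinh (d * s) * d : ℝ) : ℂ)) s := by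
    have h0 : ((Real.cosh (d * s) : ℝ) : ℂ) ∈ Complex.slitPlane := by
      rw [Complex.mem_slitPlane_iff]
      left
      simp only [Complex.ofReal_re]
      exact Real.cosh_pos (d * s)
    have h := (Complex.hasStrictDerivAt_cpow_const (c := -w) h0).hasDerivAt.comp s
      hcosh.ofReal_comp
    simpa [Function.comp_def] using h
  have hE : HasDerivAt (fun t : ℝ => Complex.exp (c₀ * (t : ℂ)))
      (Complex.exp (c₀ * (s : ℂ)) * c₀) s := by
    have hlin : HasDerivAt (fun t : ℝ => c₀ * (t : ℂ)) c₀ s := by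
      simpa using ((hasDerivAt_id (s : ℂ)).const_mul c₀).comp_ofReal
    exact hlin.cexp
  have total := (hE.mul hS).mul hX
  rw [hfun]
  refine total.congr_deriv ?_
  have hx0 : ((Real.cosh (d * s) : ℝ) : ℂ) ≠ 0 := hx s
  have hxw : ((Real.cosh (d * s) : ℝ) : ℂ) ^ w ≠ 0 := by
    rw [Complex.cpow_def_of_ne_zero hx0]; exact Complex.exp_ne_zero _
  have e1 : ((Real.cosh (d * s) : ℝ) : ℂ) ^ (-w)
      = (((Real.cosh (d * s) : ℝ) : ℂ) ^ w)⁻¹ := Complex.cpow_neg _ w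
  have e2 : ((Real.cosh (d * s) : ℝ) : ℂ) ^ (-w - 1)
      = (((Real.cosh (d * s) : ℝ) : ℂ) ^ w * ((Real.cosh (d * s) : ℝ) : ℂ))⁻¹ := by
    rw [show -w - 1 = -(w + 1) by ring, Complex.cpow_neg,
      Complex.cpow_add _ _ hx0, Complex.cpow_one]
  have e3 : ((Real.cosh (d * s) : ℝ) : ℂ) ^ (w - 1)
      = ((Real.cosh (d * s) : ℝ) : ℂ) ^ w / ((Real.cosh (d * s) : ℝ) : ℂ) := by
    rw [Complex.cpow_sub _ _ hx0, Complex.cpow_one]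
  have e4 : ((Real.cosh (d * s) : ℝ) : ℂ) ^ (w + 1)
      = ((Real.cosh (d * s) : ℝ) : ℂ) ^ w * ((Real.cosh (d * s) : ℝ) : ℂ) := by
    rw [Complex.cpow_add _ _ hx0, Complex.cpow_one]
  unfold itd
  have h1 : -(Complex.I * (α : ℂ) * L * (s : ℂ)) / (δ : ℂ) = c₀ * (s : ℂ) := by
    rw [hc₀]; ring
  have h2a : (((Q - 2 : ℝ) : ℂ) + 1) + Complex.I * (C : ℂ) * L = w - 1 := by
    rw [hw]; push_cast; ring
  have h2b : (((Q : ℝ) : ℂ) + 1) + Complex.I * (C : ℂ) * L = w + 1 := by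
    rw [hw]; push_cast; ring
  rw [hL] at h1 h2a h2b
  simp only [h1, h2a, h2b, e1, e2, e3, e4, Pi.mul_apply]
  push_cast
  field_simp
  ring

theorem stmt5 (α d δ C : ℝ) (hα : 0 < α) (hd : 0 < d) (hδ : 0 < δ)
    (l : ℤ) (hl : l ≠ 0) (n : ℕ) (hn : 1 ≤ n) (Q : ℝ) (hQ : 0 < Q)
    (hQn : (n : ℝ) < Q + 1) :
    Iint α d δ C l n Q
      = (-(Complex.I * ((|l| : ℤ) : ℂ) * (α : ℂ))
            / ((d : ℂ) * (δ : ℂ) * ((Q : ℂ) + Complex.I * (C : ℂ) * ((|l| : ℤ) : ℂ))))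
          * Iint α d δ C l (n - 1) (Q - 1)
        + (((n : ℂ) - 1) / ((Q : ℂ) + Complex.I * (C : ℂ) * ((|l| : ℤ) : ℂ)))
          * Iint α d δ C l (n - 2) (Q - 2) := by
  set L : ℂ := ((|l| : ℤ) : ℂ) with hL
  set w : ℂ := (Q : ℂ) + Complex.I * (C : ℂ) * L with hw
  set A : ℂ := -(Complex.I * (α : ℂ) * L) / (δ : ℂ) with hA
  set B : ℂ := (d : ℂ) * ((n : ℂ) - 1) with hB
  set D : ℂ := -(w * (d : ℂ)) with hD
  have hw0 : w ≠ 0 := by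
    intro h
    have : w.re = 0 := by rw [h]; simp
    rw [hw] at this
    simp [Complex.add_re, Complex.mul_re, hL] at this
    exact hQ.ne' this
  have hd0 : ((d : ℂ)) ≠ 0 := by exact_mod_cast hd.ne'
  have hδ0 : ((δ : ℂ)) ≠ 0 := by exact_mod_cast hδ.ne'
  have hD0 : D ≠ 0 := by
    rw [hD]
    exact neg_ne_zero.mpr (mul_ne_zero hw0 hd0)
  -- integrabilities
  have hI1 : Integrable (itd α d δ C l (n - 1) (Q - 1)) := by
    apply itd_integrable α δ C hd l
    rw [Nat.cast_sub hn]
    push_cast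
    linarith
  have hI3 : Integrable (itd α d δ C l n Q) := itd_integrable α δ C hd l n (by linarith)
  have hI2' : Integrable (fun s => B * itd α d δ C l (n - 2) (Q - 2) s) := by
    rcases eq_or_lt_of_le hn with h1 | h2
    · have : B = 0 := by rw [hB, ← h1]; norm_num
      simp [this]
    · have h2' : 2 ≤ n := h2
      apply Integrable.const_mul
      apply itd_integrable α δ C hd l
      rw [Nat.cast_sub h2']
      push_cast
      linarith
  -- derivative function
  set G : ℝ → ℂ := fun s =>
    A * itd α d δ C l (n - 1) (Q - 1) s + B * itd α d δ C l (n - 2) (Q - 2) s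
      + D * itd α d δ C l n Q s with hG
  have hGderiv : ∀ s : ℝ, HasDerivAt (itd α d δ C l (n - 1) (Q - 1)) (G s) s := by
    intro s
    exact itd_hasDeriv α δ C hd l hn Q s
  have hGint : Integrable G :=
    ((hI1.const_mul A).add hI2').add (hI3.const_mul D)
  have hk1 : ((n - 1 : ℕ) : ℝ) < (Q - 1) + 1 := by
    rw [Nat.cast_sub hn]; push_cast; linarith
  have htop : Tendsto (itd α d δ C l (n - 1) (Q - 1)) atTop (nhds 0) :=
    itd_tendsto_top α δ C hd l (n - 1) hk1
  have hbot : Tendsto (itd α d δ C l (n - 1) (Q - 1)) atBot (nhds 0) :=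
    itd_tendsto_bot α δ C hd l (n - 1) hk1
  have hIoi : ∫ s in Ioi (0 : ℝ), G s = 0 - itd α d δ C l (n - 1) (Q - 1) 0 :=
    integral_Ioi_of_hasDerivAt_of_tendsto' (fun x _ => hGderiv x)
      hGint.integrableOn htop
  have hIic : ∫ s in Iic (0 : ℝ), G s = itd α d δ C l (n - 1) (Q - 1) 0 - 0 :=
    integral_Iic_of_hasDerivAt_of_tendsto' (fun x _ => hGderiv x)
      hGint.integrableOn hbot
  have hzero : ∫ s : ℝ, G s = 0 := by
    rw [← intervalIntegral.integral_Iic_add_Ioi (b := (0 : ℝ)) hGint.integrableOn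
      hGint.integrableOn, hIoi, hIic]
    ring
  have hsplit : ∫ s : ℝ, G s
      = A * Iint α d δ C l (n - 1) (Q - 1) + B * Iint α d δ C l (n - 2) (Q - 2)
        + D * Iint α d δ C l n Q := by
    have e1 := integral_add (μ := volume) ((hI1.const_mul A).add hI2') (hI3.const_mul D)
    have e2 := integral_add (μ := volume) (hI1.const_mul A) hI2'
    simp only [Pi.add_apply] at e1 e2
    rw [hG, Iint_eq, Iint_eq, Iint_eq]
    rw [e1, e2, integral_const_mul, integral_const_mul, integral_const_mul]
  have heq : A * Iint α d δ C l (n - 1) (Q - 1) + B * Iint α d δ C l (n - 2) (Q - 2)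
      + D * Iint α d δ C l n Q = 0 := by rw [← hsplit, hzero]
  have h3 : Iint α d δ C l n Q
      = (A * Iint α d δ C l (n - 1) (Q - 1) + B * Iint α d δ C l (n - 2) (Q - 2))
          / (w * (d : ℂ)) := by
    rw [eq_div_iff (mul_ne_zero hw0 hd0)]
    have : D = -(w * (d : ℂ)) := hD
    linear_combination -heq - Iint α d δ C l n Q * this
  rw [h3, hA, hB]
  field_simp
end

section
/- Let α, d, δ > 0, C ∈ ℝ, l ∈ ℤ, n ∈ ℕ and Q ∈ ℝ with Q + 1 > n, and let ρ > 0 satisfy ρ δ < π/2. Set s(t) := −(i/d)(π/2 − ρδ) + t for t ∈ ℝ. Then I_{n,Q}^{l,C} = e^{−(α|l|/d)(π/(2δ) − ρ)} · ∫_{−∞}^{∞} e^{−i α |l| t/δ} · sinh(d s(t))^n / cosh(d s(t))^{Q+1+iC|l|} dt, where along the shifted line the complex powers are taken with the principal branch (this is well defined since Re cosh(d s(t)) = cosh(d t)·cos(π/2 − ρδ) > 0 for all t). -/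
open Complex MeasureTheory Set Filter Topology
open scoped Interval


lemma even_exp_integrable {k : ℝ} (hk : 0 < k) :
    Integrable (fun x : ℝ => Real.exp (-(k * |x|))) := by
  have hIoi : IntegrableOn (fun x : ℝ => Real.exp (-(k * |x|))) (Ioi 0) := by
    refine (exp_neg_integrableOn_Ioi 0 hk).congr_fun ?_ measurableSet_Ioi
    intro x hx
    simp [abs_of_pos (mem_Ioi.mp hx)]
  have hIio : IntegrableOn (fun x : ℝ => Real.exp (-(k * |x|))) (Iio 0) := by
    have hmp : MeasurePreserving (fun x : ℝ => -x) volume volume :=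
      Measure.measurePreserving_neg _
    have hme : MeasurableEmbedding (fun x : ℝ => -x) :=
      (Homeomorph.neg ℝ).measurableEmbedding
    have h := (hmp.integrableOn_comp_preimage hme).mpr hIoi
    have hpre : (fun x : ℝ => -x) ⁻¹' (Ioi 0) = Iio 0 := by
      ext x; simp
    rw [hpre] at h
    refine h.congr_fun ?_ measurableSet_Iio
    intro x _
    simp [abs_neg]
  have hsing : IntegrableOn (fun x : ℝ => Real.exp (-(k * |x|))) ({0} : Set ℝ) :=
    (integrableOn_singleton_iff (by simp)).mpr (Or.inr (by simp))
  have : IntegrableOn (fun x : ℝ => Real.exp (-(k * |x|))) (Iio 0 ∪ {0} ∪ Ioi 0) :=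
    (hIio.union hsing).union hIoi
  have huniv : (Iio (0:ℝ) ∪ {0} ∪ Ioi 0) = univ := by
    ext x; rcases lt_trichotomy x 0 with h|h|h <;> simp [h]
  rwa [huniv, integrableOn_univ] at this

lemma contour_shift (f : ℂ → ℂ) (y0 M k : ℝ) (hy0 : y0 ≤ 0) (hk : 0 < k)
    (hf : ∀ z : ℂ, y0 ≤ z.im → z.im ≤ 0 → DifferentiableAt ℂ f z)
    (hb : ∀ x y : ℝ, y0 ≤ y → y ≤ 0 → ‖f (x + y * I)‖ ≤ M * Real.exp (-(k * |x|))) :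
    (∫ t : ℝ, f t) = ∫ t : ℝ, f (t + y0 * I) := by
  have hdom : Integrable (fun x : ℝ => M * Real.exp (-(k * |x|))) :=
    (even_exp_integrable hk).const_mul M
  -- integrability on each horizontal line
  have hcont : ∀ y : ℝ, y0 ≤ y → y ≤ 0 → Continuous (fun t : ℝ => f (t + y * I)) := by
    intro y h1 h2
    have hline : Continuous (fun t : ℝ => (t : ℂ) + y * I) := by continuity
    refine (continuous_iff_continuousAt).mpr fun t => ?_
    exact ((hf _ (by simp [h1]) (by simp [h2])).continuousAt).comp hline.continuousAt
  have hintline : ∀ y : ℝ, y0 ≤ y → y ≤ 0 → Integrable (fun t : ℝ => f (t + y * I)) := by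
    intro y h1 h2
    refine hdom.mono' ((hcont y h1 h2).aestronglyMeasurable) ?_
    exact .of_forall fun x => hb x y h1 h2
  have hI0 := hintline 0 hy0 le_rfl
  have hIy := hintline y0 le_rfl hy0
  -- horizontal limits
  have hA : Tendsto (fun R : ℝ => ∫ x in (-R)..R, f (x + (0:ℝ) * I)) atTop
      (𝓝 (∫ t : ℝ, f (t + (0:ℝ) * I))) :=
    intervalIntegral_tendsto_integral hI0 tendsto_neg_atTop_atBot tendsto_id
  have hB : Tendsto (fun R : ℝ => ∫ x in (-R)..R, f (x + y0 * I)) atTop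
      (𝓝 (∫ t : ℝ, f (t + y0 * I))) :=
    intervalIntegral_tendsto_integral hIy tendsto_neg_atTop_atBot tendsto_id
  -- vertical integrals tend to 0
  have hvert : ∀ g : ℝ → ℝ, (∀ R : ℝ, |g R| = |R|) →
      Tendsto (fun R : ℝ => I • ∫ y in y0..(0:ℝ), f ((g R : ℝ) + y * I)) atTop (𝓝 0) := by
    intro g hg
    have hbnd : ∀ R : ℝ, ‖I • ∫ y in y0..(0:ℝ), f ((g R : ℝ) + y * I)‖
        ≤ M * Real.exp (-(k * |R|)) * |0 - y0| := by
      intro R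
      rw [norm_smul, Complex.norm_I, one_mul]
      refine intervalIntegral.norm_integral_le_of_norm_le_const fun y hy => ?_
      rw [uIoc_of_le hy0] at hy
      have := hb (g R) y hy.1.le hy.2
      rwa [hg R] at this
    have hlim : Tendsto (fun R : ℝ => M * Real.exp (-(k * |R|)) * |0 - y0|) atTop (𝓝 0) := by
      have h1 : Tendsto (fun R : ℝ => -(k * |R|)) atTop atBot := by
        refine tendsto_neg_atBot_iff.mpr ?_
        exact (tendsto_abs_atTop_atTop).const_mul_atTop hk
      have h2 := Real.tendsto_exp_atBot.comp h1
      have := (h2.const_mul M).mul_const (|0 - y0|)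
      simpa using this
    exact squeeze_zero_norm hbnd hlim
  have hVR := hvert id fun R => rfl
  have hVL := hvert (fun R => -R) fun R => abs_neg R
  -- rectangle identity
  have hrect : ∀ R : ℝ,
      (∫ x in (-R)..R, f (x + (0:ℝ) * I)) - (∫ x in (-R)..R, f (x + y0 * I))
        = I • (∫ y in y0..(0:ℝ), f ((R : ℝ) + y * I))
          - I • (∫ y in y0..(0:ℝ), f ((-R : ℝ) + y * I)) := by
    intro R
    have hdiff : DifferentiableOn ℂ f ([[(-R : ℝ), R]] ×ℂ [[y0, (0:ℝ)]]) := by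
      intro z hz
      rw [Complex.mem_reProdIm] at hz
      have h2 := hz.2
      rw [uIcc_of_le hy0] at h2
      exact (hf z h2.1 h2.2).differentiableWithinAt
    have key := Complex.integral_boundary_rect_eq_zero_of_differentiableOn f
      (⟨-R, y0⟩ : ℂ) (⟨R, 0⟩ : ℂ) hdiff
    have hre1 : (⟨-R, y0⟩ : ℂ).re = -R := rfl
    have hre2 : (⟨R, 0⟩ : ℂ).re = R := rfl
    have him1 : (⟨-R, y0⟩ : ℂ).im = y0 := rfl
    have him2 : (⟨R, 0⟩ : ℂ).im = 0 := rfl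
    rw [hre1, hre2, him1, him2] at key
    push_cast at key ⊢
    simp only [smul_eq_mul] at key ⊢
    linear_combination -key
  have h1 : Tendsto (fun R : ℝ =>
      (∫ x in (-R)..R, f (x + (0:ℝ) * I)) - (∫ x in (-R)..R, f (x + y0 * I))) atTop
      (𝓝 ((∫ t : ℝ, f (t + (0:ℝ) * I)) - ∫ t : ℝ, f (t + y0 * I))) := hA.sub hB
  have h2 : Tendsto (fun R : ℝ =>
      (∫ x in (-R)..R, f (x + (0:ℝ) * I)) - (∫ x in (-R)..R, f (x + y0 * I))) atTop (𝓝 0) := by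
    have := hVR.sub hVL
    rw [sub_zero] at this
    refine this.congr fun R => ?_
    exact (hrect R).symm
  have h3 : (∫ t : ℝ, f (t + (0:ℝ) * I)) - (∫ t : ℝ, f (t + y0 * I)) = 0 :=
    tendsto_nhds_unique h1 h2
  have h4 : (∫ t : ℝ, f (t + (0:ℝ) * I)) = ∫ t : ℝ, f (t + y0 * I) := sub_eq_zero.mp h3
  simpa using h4

lemma norm_sinh_le (z : ℂ) : ‖Complex.sinh z‖ ≤ Real.cosh z.re := by
  rw [Complex.sinh, Real.cosh_eq, norm_div]
  gcongr
  · calc ‖Complex.exp z - Complex.exp (-z)‖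
        ≤ ‖Complex.exp z‖ + ‖Complex.exp (-z)‖ := norm_sub_le _ _
    _ = Real.exp z.re + Real.exp (-z.re) := by
        simp [Complex.norm_exp]
  · norm_num

lemma cosh_re' (z : ℂ) : (Complex.cosh z).re = Real.cosh z.re * Real.cos z.im := by
  rw [Complex.cosh, Real.cosh_eq]
  simp [Complex.exp_re, Complex.add_re, Complex.div_re, Complex.normSq]
  ring

lemma half_exp_abs_le_cosh (x : ℝ) : Real.exp |x| / 2 ≤ Real.cosh x := by
  rw [Real.cosh_eq]
  rcases abs_cases x with ⟨h, _⟩ | ⟨h, _⟩ <;> rw [h] <;>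
    [skip; skip] <;> nlinarith [Real.exp_pos x, Real.exp_pos (-x)]



theorem stmt6 (α d δ C ρ : ℝ) (hα : 0 < α) (hd : 0 < d) (hδ : 0 < δ)
    (l : ℤ) (n : ℕ) (Q : ℝ) (hQn : (n : ℝ) < Q + 1)
    (hρ : 0 < ρ) (hρδ : ρ * δ < Real.pi / 2) :
    Iint α d δ C l n Q
      = Complex.exp (-(((α * ((|l| : ℤ) : ℝ) / d) * (Real.pi / (2 * δ) - ρ) : ℝ) : ℂ))
          * ∫ t : ℝ,
              Complex.exp (-(Complex.I * (α : ℂ) * ((|l| : ℤ) : ℂ) * (t : ℂ)) / (δ : ℂ))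
                * (Complex.sinh ((d : ℂ) *
                      (-(Complex.I / (d : ℂ)) * ((Real.pi / 2 - ρ * δ : ℝ) : ℂ) + (t : ℂ)))) ^ n
                / ((Complex.cosh ((d : ℂ) *
                      (-(Complex.I / (d : ℂ)) * ((Real.pi / 2 - ρ * δ : ℝ) : ℂ) + (t : ℂ))))
                    ^ (((Q : ℂ) + 1) + Complex.I * (C : ℂ) * ((|l| : ℤ) : ℂ))) := by

  have hπ := Real.pi_pos
  set al : ℝ := ((|l| : ℤ) : ℝ) with hal_def
  have hal : 0 ≤ al := by positivity
  set c : ℝ := Real.pi / 2 - ρ * δ with hc_def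
  have hc0 : 0 < c := by simp only [hc_def]; linarith
  have hcπ : c < Real.pi / 2 := by simp only [hc_def]; nlinarith
  set y0 : ℝ := -(c / d) with hy0_def
  have hcd : 0 ≤ c / d := by positivity
  have hy0 : y0 ≤ 0 := by simp only [hy0_def]; linarith
  set w : ℂ := ((Q : ℂ) + 1) + Complex.I * (C : ℂ) * ((|l| : ℤ) : ℂ) with hw_def
  clear_value al c y0
  have hwre : w.re = Q + 1 := by simp [hw_def]
  have hwim : w.im = C * al := by simp [hw_def, hal_def]
  set f : ℂ → ℂ := fun z =>
    Complex.exp (-(Complex.I * (α : ℂ) * ((|l| : ℤ) : ℂ) * z) / (δ : ℂ))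
      * (Complex.sinh ((d : ℂ) * z)) ^ n / (Complex.cosh ((d : ℂ) * z)) ^ w with hf_def
  -- positivity of the real part of cosh on the strip
  have hcoshre : ∀ z : ℂ, y0 ≤ z.im → z.im ≤ 0 →
      (Complex.cosh ((d : ℂ) * z)).re = Real.cosh (d * z.re) * Real.cos (d * z.im) := by
    intro z _ _
    rw [cosh_re']
    simp
  have hcoshpos : ∀ z : ℂ, y0 ≤ z.im → z.im ≤ 0 → 0 < (Complex.cosh ((d : ℂ) * z)).re := by
    intro z h1 h2
    rw [hcoshre z h1 h2]
    have h3 : -c ≤ d * z.im := by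
      rw [hy0_def] at h1
      calc -c = d * (-(c / d)) := by field_simp
      _ ≤ d * z.im := by gcongr
    have h4 : d * z.im ≤ 0 := mul_nonpos_of_nonneg_of_nonpos hd.le h2
    have : 0 < Real.cos (d * z.im) := by
      apply Real.cos_pos_of_mem_Ioo
      refine Set.mem_Ioo.mpr ⟨by linarith [h3, hcπ], by linarith [h4, hπ]⟩
    positivity
  have hne : ∀ z : ℂ, y0 ≤ z.im → z.im ≤ 0 → Complex.cosh ((d : ℂ) * z) ≠ 0 := by
    intro z h1 h2 h
    have h' := hcoshpos z h1 h2
    rw [h] at h'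
    simp at h'
  have hdiff : ∀ z : ℂ, y0 ≤ z.im → z.im ≤ 0 → DifferentiableAt ℂ f z := by
    intro z h1 h2
    have hb : DifferentiableAt ℂ (fun z : ℂ => Complex.cosh ((d : ℂ) * z)) z :=
      (differentiableAt_id.const_mul _).ccosh
    have hpow : DifferentiableAt ℂ (fun z : ℂ => Complex.cosh ((d : ℂ) * z) ^ w) z :=
      hb.cpow (differentiableAt_const w) (Or.inl (hcoshpos z h1 h2))
    have hexp : DifferentiableAt ℂ
        (fun z : ℂ => Complex.exp (-(Complex.I * (α : ℂ) * ((|l| : ℤ) : ℂ) * z) / (δ : ℂ))) z := by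
      apply DifferentiableAt.cexp
      apply DifferentiableAt.div_const
      exact (differentiableAt_id.const_mul _).neg
    have hsinh : DifferentiableAt ℂ (fun z : ℂ => (Complex.sinh ((d : ℂ) * z)) ^ n) z :=
      ((differentiableAt_id.const_mul _).csinh).pow n
    have hpne : Complex.cosh ((d : ℂ) * z) ^ w ≠ 0 := by
      rw [Complex.cpow_def_of_ne_zero (hne z h1 h2)]
      exact Complex.exp_ne_zero _
    exact (hexp.mul hsinh).div hpow hpne
  set k : ℝ := (Q + 1 - n) * d with hk_def
  have hk : 0 < k := mul_pos (by linarith) hd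
  have hcosc : 0 < Real.cos c := Real.cos_pos_of_mem_Ioo ⟨by linarith, hcπ⟩
  set M : ℝ := Real.exp (Real.pi * |C * al|) / Real.cos c ^ (Q + 1)
      * 2 ^ (Q + 1 - (n : ℝ)) with hM_def
  have hbound : ∀ x y : ℝ, y0 ≤ y → y ≤ 0 →
      ‖f ((x : ℂ) + (y : ℂ) * Complex.I)‖ ≤ M * Real.exp (-(k * |x|)) := by
    intro x y h1 h2
    set u : ℂ := (x : ℂ) + (y : ℂ) * Complex.I with hu_def
    have hure : u.re = x := by simp [hu_def]
    have huim : u.im = y := by simp [hu_def]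
    have h1' : y0 ≤ u.im := by rw [huim]; exact h1
    have h2' : u.im ≤ 0 := by rw [huim]; exact h2
    have hneu := hne u h1' h2'
    have hX : 0 < Real.cosh (d * x) := Real.cosh_pos _
    -- split the norm
    have hsplit : ‖f u‖ = ‖Complex.exp (-(Complex.I * (α : ℂ) * ((|l| : ℤ) : ℂ) * u) / (δ : ℂ))‖
        * ‖Complex.sinh ((d : ℂ) * u)‖ ^ n / ‖Complex.cosh ((d : ℂ) * u) ^ w‖ := by
      rw [hf_def]
      simp [norm_div, norm_mul, norm_pow]
    -- exponential factor
    have hEexp : -(Complex.I * (α : ℂ) * ((|l| : ℤ) : ℂ) * u) / (δ : ℂ)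
        = ((α * al * y / δ : ℝ) : ℂ) + ((-(α * al * x / δ) : ℝ) : ℂ) * Complex.I := by
      have hcast : ((|l| : ℤ) : ℂ) = ((al : ℝ) : ℂ) := by rw [hal_def]; norm_cast
      rw [hu_def, hcast]
      push_cast
      linear_combination (-((α : ℂ) * (al : ℂ) * (y : ℂ) / (δ : ℂ))) * Complex.I_sq
    have hE : ‖Complex.exp (-(Complex.I * (α : ℂ) * ((|l| : ℤ) : ℂ) * u) / (δ : ℂ))‖ ≤ 1 := by
      rw [hEexp, Complex.norm_exp]
      have : (((α * al * y / δ : ℝ) : ℂ) + ((-(α * al * x / δ) : ℝ) : ℂ) * Complex.I).re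
          = α * al * y / δ := by simp
      rw [this]
      rw [Real.exp_le_one_iff]
      have : α * al * y ≤ 0 := mul_nonpos_of_nonneg_of_nonpos (by positivity) h2
      exact div_nonpos_of_nonpos_of_nonneg this hδ.le
    -- sinh factor
    have hS : ‖Complex.sinh ((d : ℂ) * u)‖ ≤ Real.cosh (d * x) := by
      have := norm_sinh_le ((d : ℂ) * u)
      have hre : ((d : ℂ) * u).re = d * x := by simp [hu_def]
      rwa [hre] at this
    have hSn : ‖Complex.sinh ((d : ℂ) * u)‖ ^ n ≤ Real.cosh (d * x) ^ n :=
      pow_le_pow_left₀ (norm_nonneg _) hS n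
    -- cosh power factor lower bound
    have hcosy : Real.cos c ≤ Real.cos (d * y) := by
      rw [← Real.cos_abs (d * y)]
      apply Real.cos_le_cos_of_nonneg_of_le_pi (abs_nonneg _) (by linarith)
      rw [abs_le]
      constructor
      · calc -c = d * y0 := by rw [hy0_def]; field_simp
        _ ≤ d * y := by gcongr
      · have : d * y ≤ 0 := mul_nonpos_of_nonneg_of_nonpos hd.le h2
        linarith
    have habsge : Real.cosh (d * x) * Real.cos c ≤ ‖Complex.cosh ((d : ℂ) * u)‖ := by
      have hre := Complex.re_le_norm (Complex.cosh ((d : ℂ) * u))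
      rw [hcoshre u h1' h2', hure, huim] at hre
      calc Real.cosh (d * x) * Real.cos c ≤ Real.cosh (d * x) * Real.cos (d * y) := by gcongr
      _ ≤ _ := hre
    have hPeq : ‖Complex.cosh ((d : ℂ) * u) ^ w‖
        = ‖Complex.cosh ((d : ℂ) * u)‖ ^ (Q + 1)
          / Real.exp (Complex.arg (Complex.cosh ((d : ℂ) * u)) * (C * al)) := by
      rw [Complex.norm_cpow_of_ne_zero hneu, hwre, hwim]
    have hPlow : (Real.cosh (d * x) * Real.cos c) ^ (Q + 1) * Real.exp (-(Real.pi * |C * al|))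
        ≤ ‖Complex.cosh ((d : ℂ) * u) ^ w‖ := by
      rw [hPeq, le_div_iff₀ (Real.exp_pos _)]
      have e1 : (Real.cosh (d * x) * Real.cos c) ^ (Q + 1)
          ≤ ‖Complex.cosh ((d : ℂ) * u)‖ ^ (Q + 1) :=
        Real.rpow_le_rpow (by positivity) habsge (by linarith)
      have e2 : Real.exp (-(Real.pi * |C * al|))
          * Real.exp (Complex.arg (Complex.cosh ((d : ℂ) * u)) * (C * al)) ≤ 1 := by
        rw [← Real.exp_add, Real.exp_le_one_iff]
        have : Complex.arg (Complex.cosh ((d : ℂ) * u)) * (C * al)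
            ≤ Real.pi * |C * al| := by
          calc Complex.arg (Complex.cosh ((d : ℂ) * u)) * (C * al)
              ≤ |Complex.arg (Complex.cosh ((d : ℂ) * u)) * (C * al)| := le_abs_self _
          _ = |Complex.arg (Complex.cosh ((d : ℂ) * u))| * |C * al| := abs_mul _ _
          _ ≤ Real.pi * |C * al| :=
              mul_le_mul_of_nonneg_right (Complex.abs_arg_le_pi _) (abs_nonneg _)
        linarith
      calc (Real.cosh (d * x) * Real.cos c) ^ (Q + 1) * Real.exp (-(Real.pi * |C * al|))
          * Real.exp (Complex.arg (Complex.cosh ((d : ℂ) * u)) * (C * al))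
          = (Real.exp (-(Real.pi * |C * al|))
              * Real.exp (Complex.arg (Complex.cosh ((d : ℂ) * u)) * (C * al)))
            * (Real.cosh (d * x) * Real.cos c) ^ (Q + 1) := by ring
      _ ≤ 1 * ‖Complex.cosh ((d : ℂ) * u)‖ ^ (Q + 1) :=
          mul_le_mul e2 e1 (by positivity) one_pos.le
      _ = _ := one_mul _
    -- combine
    have hmain : ‖f u‖ ≤ Real.cosh (d * x) ^ n
        / ((Real.cosh (d * x) * Real.cos c) ^ (Q + 1) * Real.exp (-(Real.pi * |C * al|))) := by
      rw [hsplit]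
      apply div_le_div₀ (by positivity) ?_ (by positivity) hPlow
      calc ‖Complex.exp (-(Complex.I * (α : ℂ) * ((|l| : ℤ) : ℂ) * u) / (δ : ℂ))‖
          * ‖Complex.sinh ((d : ℂ) * u)‖ ^ n
          ≤ 1 * Real.cosh (d * x) ^ n := mul_le_mul hE hSn (by positivity) one_pos.le
      _ = _ := one_mul _
    have hXlow : Real.exp (d * |x|) / 2 ≤ Real.cosh (d * x) := by
      have h := half_exp_abs_le_cosh (d * x)
      rwa [abs_mul, abs_of_pos hd] at h
    have hr : (n : ℝ) - (Q + 1) ≤ 0 := by linarith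
    have hstep1 : Real.cosh (d * x) ^ n
        / ((Real.cosh (d * x) * Real.cos c) ^ (Q + 1) * Real.exp (-(Real.pi * |C * al|)))
        = Real.exp (Real.pi * |C * al|) / Real.cos c ^ (Q + 1)
          * Real.cosh (d * x) ^ ((n : ℝ) - (Q + 1)) := by
      rw [Real.mul_rpow hX.le hcosc.le, Real.exp_neg, Real.rpow_sub hX, Real.rpow_natCast]
      have e1 : Real.cosh (d * x) ^ (Q + 1) ≠ 0 := by positivity
      have e2 : Real.cos c ^ (Q + 1) ≠ 0 := by positivity
      have e3 : Real.exp (Real.pi * |C * al|) ≠ 0 := by positivity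
      field_simp
    have hstep2 : Real.cosh (d * x) ^ ((n : ℝ) - (Q + 1))
        ≤ (Real.exp (d * |x|) / 2) ^ ((n : ℝ) - (Q + 1)) :=
      Real.rpow_le_rpow_of_nonpos (by positivity) hXlow hr
    have hstep3 : (Real.exp (d * |x|) / 2) ^ ((n : ℝ) - (Q + 1))
        = 2 ^ (Q + 1 - (n : ℝ)) * Real.exp (-(k * |x|)) := by
      rw [Real.div_rpow (Real.exp_pos _).le (by norm_num : (0:ℝ) ≤ 2)]
      rw [← Real.exp_mul]
      have h2 : (2:ℝ) ^ ((n:ℝ) - (Q+1)) = ((2:ℝ) ^ (Q + 1 - (n:ℝ)))⁻¹ := by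
        rw [← Real.rpow_neg (by norm_num)]
        congr 1
        ring
      rw [h2]
      have harg : d * |x| * ((n:ℝ) - (Q + 1)) = -(k * |x|) := by rw [hk_def]; ring
      rw [harg, div_eq_mul_inv, inv_inv]
      ring
    calc ‖f u‖ ≤ Real.cosh (d * x) ^ n
        / ((Real.cosh (d * x) * Real.cos c) ^ (Q + 1) * Real.exp (-(Real.pi * |C * al|))) := hmain
    _ = Real.exp (Real.pi * |C * al|) / Real.cos c ^ (Q + 1)
          * Real.cosh (d * x) ^ ((n : ℝ) - (Q + 1)) := hstep1
    _ ≤ Real.exp (Real.pi * |C * al|) / Real.cos c ^ (Q + 1)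
          * (Real.exp (d * |x|) / 2) ^ ((n : ℝ) - (Q + 1)) := by
        apply mul_le_mul_of_nonneg_left hstep2 (by positivity)
    _ = M * Real.exp (-(k * |x|)) := by
        rw [hstep3, hM_def]
        ring
  have hshift := contour_shift f y0 M k hy0 hk hdiff hbound
  have hLHS : Iint α d δ C l n Q = ∫ t : ℝ, f (t : ℂ) := by
    unfold Iint
    congr 1
    funext s
    rw [hf_def]
    simp only [← Complex.ofReal_mul, Complex.ofReal_sinh, Complex.ofReal_cosh, ← hw_def]
  have hd' : (d : ℂ) ≠ 0 := Complex.ofReal_ne_zero.mpr hd.ne'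
  have hδ' : (δ : ℂ) ≠ 0 := Complex.ofReal_ne_zero.mpr hδ.ne'
  have hRHS : (∫ t : ℝ, f ((t : ℂ) + (y0 : ℂ) * Complex.I))
      = Complex.exp (-(((α * al / d) * (Real.pi / (2 * δ) - ρ) : ℝ) : ℂ))
        * ∫ t : ℝ,
            Complex.exp (-(Complex.I * (α : ℂ) * ((|l| : ℤ) : ℂ) * (t : ℂ)) / (δ : ℂ))
              * (Complex.sinh ((d : ℂ) * (-(Complex.I / (d : ℂ)) * ((c : ℝ) : ℂ) + (t : ℂ)))) ^ n
              / ((Complex.cosh ((d : ℂ) * (-(Complex.I / (d : ℂ)) * ((c : ℝ) : ℂ) + (t : ℂ)))) ^ w) := by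
    rw [← MeasureTheory.integral_const_mul]
    congr 1
    funext t
    simp only [hf_def]
    have hargm : (d : ℂ) * ((t : ℂ) + (y0 : ℂ) * Complex.I)
        = (d : ℂ) * (-(Complex.I / (d : ℂ)) * ((c : ℝ) : ℂ) + (t : ℂ)) := by
      rw [hy0_def]
      push_cast
      field_simp
      ring
    rw [hargm]
    have hexpeq : Complex.exp (-(Complex.I * (α : ℂ) * ((|l| : ℤ) : ℂ) * ((t : ℂ) + (y0 : ℂ) * Complex.I)) / (δ : ℂ))
        = Complex.exp (-(((α * al / d) * (Real.pi / (2 * δ) - ρ) : ℝ) : ℂ))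
          * Complex.exp (-(Complex.I * (α : ℂ) * ((|l| : ℤ) : ℂ) * (t : ℂ)) / (δ : ℂ)) := by
      rw [← Complex.exp_add]
      congr 1
      have hcast : ((|l| : ℤ) : ℂ) = ((al : ℝ) : ℂ) := by rw [hal_def]; norm_cast
      rw [hcast, hy0_def, hc_def]
      push_cast
      field_simp
      ring_nf
      linear_combination ((α:ℂ) * (al:ℂ) * (Real.pi:ℂ)
        - (α:ℂ) * (al:ℂ) * (ρ:ℂ) * (δ:ℂ) * 2) * Complex.I_sq
    rw [hexpeq]
    ring
  rw [hLHS, hshift, hRHS]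
end

section
/- Let α, d, δ > 0, C ∈ ℝ and Q ∈ ℝ with Q ≥ 1. Set a := (d(Q+1+iC) + i α/δ)/(2d) and b := Q + 1 + iC (so that Re a = Re(b−a) = (Q+1)/2 > 0). Then I_{0,Q}^{1,C} = 2^{Q+iC} · d^{−1} · Γ(b−a)·Γ(a)/Γ(b), where Γ is the complex Gamma function and 2^{Q+iC} = exp((Q+iC)·log 2). -/
open MeasureTheory Set

lemma cpow_posreal {r : ℝ} (hr : 0 < r) (w : ℂ) :
    (r : ℂ) ^ w = Complex.exp (w * (Real.log r : ℂ)) := by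
  rw [Complex.cpow_def_of_ne_zero (by exact_mod_cast hr.ne'), Complex.ofReal_log hr.le, mul_comm]

lemma exps_merge (x y z w u v k : ℂ) (h : x + y - z = w + u + v) :
    Complex.exp x * k * (Complex.exp y * 1 / Complex.exp z)
      = Complex.exp w * k * (Complex.exp u * Complex.exp v) := by
  rw [mul_one, div_eq_mul_inv, ← Complex.exp_neg]
  calc Complex.exp x * k * (Complex.exp y * Complex.exp (-z))
      = k * Complex.exp (x + (y + -z)) := by rw [Complex.exp_add, Complex.exp_add]; ring
    _ = k * Complex.exp (w + (u + v)) := by rw [show x + (y + -z) = w + (u + v) by linear_combination h]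
    _ = Complex.exp w * k * (Complex.exp u * Complex.exp v) := by
        rw [Complex.exp_add, Complex.exp_add]; ring

lemma aux_pt (α d δ C Q : ℝ) (hd : 0 < d) (hδ : 0 < δ) (a b : ℂ)
    (ha : a = ((d : ℂ) * ((Q : ℂ) + 1 + Complex.I * (C : ℂ)) + Complex.I * (α : ℂ) / (δ : ℂ))
              / (2 * (d : ℂ)))
    (hb : b = (Q : ℂ) + 1 + Complex.I * (C : ℂ))
    (t : ℝ) (ht0 : 0 < t) (ht1 : t < 1) :
    |(-(1/(t*(1-t)))/(2*d))| •
      (Complex.exp (-(Complex.I * (α:ℂ) * (((Real.log (1-t) - Real.log t)/(2*d) : ℝ) : ℂ)) / (δ:ℂ))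
        * 1 / ((Real.cosh (d * ((Real.log (1-t) - Real.log t)/(2*d))) : ℂ) ^ b))
      = (2:ℂ) ^ (b-1) * (d:ℂ)⁻¹ * ((t:ℂ) ^ (a-1) * (1 - (t:ℂ)) ^ (b-a-1)) := by
  have ht1' : (0:ℝ) < 1 - t := by linarith
  have hd' : (d:ℂ) ≠ 0 := by exact_mod_cast hd.ne'
  have hδ' : (δ:ℂ) ≠ 0 := by exact_mod_cast hδ.ne'
  have habs : |(-(1/(t*(1-t)))/(2*d))| = (1/(t*(1-t))/2) * d⁻¹ := by
    rw [show (-(1/(t*(1-t)))/(2*d)) = -((1/(t*(1-t))/2) * d⁻¹) by field_simp,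
      abs_neg, abs_of_pos (by positivity)]
  have hsq : Real.sqrt t ^ 2 = t := Real.sq_sqrt ht0.le
  have hsq' : Real.sqrt (1-t) ^ 2 = 1 - t := Real.sq_sqrt ht1'.le
  have hsu : 0 < Real.sqrt t := Real.sqrt_pos.2 ht0
  have hsv : 0 < Real.sqrt (1-t) := Real.sqrt_pos.2 ht1'
  have hcosh : Real.cosh (d * ((Real.log (1-t) - Real.log t)/(2*d)))
      = (2 * (Real.sqrt t * Real.sqrt (1-t)))⁻¹ := by
    have harg : d * ((Real.log (1-t) - Real.log t)/(2*d))
        = Real.log (Real.sqrt (1-t) / Real.sqrt t) := by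
      rw [Real.log_div hsv.ne' hsu.ne', Real.log_sqrt ht1'.le, Real.log_sqrt ht0.le]
      field_simp
    rw [harg, Real.cosh_log (by positivity)]
    field_simp
    nlinarith [hsq, hsq']
  have hlogc : Real.log ((2 * (Real.sqrt t * Real.sqrt (1-t)))⁻¹)
      = -(Real.log 2 + (Real.log t / 2 + Real.log (1-t) / 2)) := by
    rw [Real.log_inv, Real.log_mul (by norm_num) (by positivity),
      Real.log_mul hsu.ne' hsv.ne', Real.log_sqrt ht0.le, Real.log_sqrt ht1'.le]
  have hc0 : ((1/(t*(1-t))/2 : ℝ) : ℂ)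
      = Complex.exp (((-(Real.log t + Real.log (1-t) + Real.log 2) : ℝ) : ℂ)) := by
    rw [← Complex.ofReal_exp]
    congr 1
    rw [Real.exp_neg, Real.exp_add, Real.exp_add, Real.exp_log ht0, Real.exp_log ht1',
      Real.exp_log (by norm_num)]
    field_simp
  rw [habs, hcosh, cpow_posreal (by positivity), hlogc, Complex.real_smul, Complex.ofReal_mul,
    Complex.ofReal_inv, hc0, show (2:ℂ) = ((2:ℝ):ℂ) by norm_num, cpow_posreal (by norm_num : (0:ℝ) < 2),
    show (1 - (t:ℂ)) = ((1 - t : ℝ) : ℂ) by push_cast; ring,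
    cpow_posreal ht0, cpow_posreal ht1']
  apply exps_merge
  subst ha hb
  push_cast
  field_simp
  ring


section helpers
variable (α d δ C Q : ℝ)

lemma phi_img (hd : 0 < d) :
    (fun t : ℝ => (Real.log (1-t) - Real.log t)/(2*d)) '' Ioo 0 1 = univ := by
  apply eq_univ_of_forall
  intro s
  have hp : (0:ℝ) < 1 + Real.exp (2*d*s) := by positivity
  refine ⟨1/(1+Real.exp (2*d*s)), ⟨by positivity, ?_⟩, ?_⟩
  · rw [div_lt_one hp]; linarith [Real.exp_pos (2*d*s)]
  · show (Real.log (1 - 1/(1+Real.exp (2*d*s))) - Real.log (1/(1+Real.exp (2*d*s))))/(2*d) = s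
    have h1 : 1 - 1/(1+Real.exp (2*d*s)) = Real.exp (2*d*s)/(1+Real.exp (2*d*s)) := by
      field_simp
      ring
    rw [h1, Real.log_div (Real.exp_pos _).ne' hp.ne', Real.log_div one_ne_zero hp.ne',
      Real.log_exp, Real.log_one]
    field_simp
    ring

lemma phi_inj (hd : 0 < d) :
    InjOn (fun t : ℝ => (Real.log (1-t) - Real.log t)/(2*d)) (Ioo 0 1) := by
  intro x hx y hy hxy
  obtain ⟨hx0, hx1⟩ := hx
  obtain ⟨hy0, hy1⟩ := hy
  have h2d : (2*d) ≠ 0 := by positivity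
  field_simp at hxy
  have hxy' : Real.log ((1-x)/x) = Real.log ((1-y)/y) := by
    rw [Real.log_div (by linarith) hx0.ne', Real.log_div (by linarith) hy0.ne']
    linarith
  have := Real.log_injOn_pos (Set.mem_Ioi.2 (div_pos (by linarith) hx0))
    (Set.mem_Ioi.2 (div_pos (by linarith) hy0)) hxy'
  field_simp at this
  linarith

lemma phi_deriv (hd : 0 < d) :
    ∀ t ∈ Ioo (0:ℝ) 1, HasDerivWithinAt (fun t : ℝ => (Real.log (1-t) - Real.log t)/(2*d))
      (-(1/(t*(1-t)))/(2*d)) (Ioo 0 1) t := by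
  intro t ht
  obtain ⟨ht0, ht1⟩ := ht
  have h1 : HasDerivAt (fun t : ℝ => Real.log (1-t)) (-(1-t)⁻¹) t := by
    have hin : HasDerivAt (fun t : ℝ => 1 - t) (-1) t := (hasDerivAt_id t).const_sub 1
    have := (Real.hasDerivAt_log (by linarith : (1:ℝ)-t ≠ 0)).comp t hin
    rw [show (1-t)⁻¹ * (-1:ℝ) = -(1-t)⁻¹ by ring] at this
    exact this
  have h2 : HasDerivAt (fun t : ℝ => Real.log t) t⁻¹ t := Real.hasDerivAt_log ht0.ne'
  have h3 := ((h1.sub h2).div_const (2*d)).hasDerivWithinAt (s := Ioo (0:ℝ) 1)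
  rw [show -(1/(t*(1-t)))/(2*d) = (-(1-t)⁻¹ - t⁻¹)/(2*d) by
    rw [div_eq_div_iff (by positivity) (by positivity)]
    field_simp [ht0.ne', show (1:ℝ)-t ≠ 0 by linarith]
    ring]
  exact h3
end helpers

theorem stmt8 (α d δ C Q : ℝ) (hα : 0 < α) (hd : 0 < d) (hδ : 0 < δ) (hQ : 1 ≤ Q)
    (a b : ℂ)
    (ha : a = ((d : ℂ) * ((Q : ℂ) + 1 + Complex.I * (C : ℂ)) + Complex.I * (α : ℂ) / (δ : ℂ))
              / (2 * (d : ℂ)))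
    (hb : b = (Q : ℂ) + 1 + Complex.I * (C : ℂ)) :
    Iint α d δ C 1 0 Q
      = (2 : ℂ) ^ ((Q : ℂ) + Complex.I * (C : ℂ)) * (d : ℂ)⁻¹
          * (Complex.Gamma (b - a) * Complex.Gamma a / Complex.Gamma b) := by
  have hd' : (d:ℂ) ≠ 0 := by exact_mod_cast hd.ne'
  have hδ' : (δ:ℂ) ≠ 0 := by exact_mod_cast hδ.ne'
  have hareval : a.re = (Q+1)/2 := by
    rw [ha, show (2*(d:ℂ)) = ((2*d:ℝ):ℂ) by push_cast; ring, Complex.div_ofReal_re,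
      show ((d:ℂ) * ((Q:ℂ)+1+Complex.I*(C:ℂ)) + Complex.I*(α:ℂ)/(δ:ℂ))
          = ((d*(Q+1) : ℝ) : ℂ) + ((d*C + α/δ : ℝ) : ℂ) * Complex.I by
        push_cast; field_simp; ring]
    simp only [Complex.add_re, Complex.ofReal_re, Complex.mul_re, Complex.I_re, Complex.I_im,
      Complex.ofReal_im]
    field_simp
    ring
  have hbreval : b.re = Q + 1 := by
    rw [hb]
    simp only [Complex.add_re, Complex.ofReal_re, Complex.one_re, Complex.mul_re, Complex.I_re,
      Complex.I_im, Complex.ofReal_im]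
    ring
  have hrea : 0 < a.re := by rw [hareval]; linarith
  have hreba : 0 < (b - a).re := by
    rw [Complex.sub_re, hareval, hbreval]; linarith
  have hIeq : Iint α d δ C 1 0 Q
      = ∫ s : ℝ, Complex.exp (-(Complex.I * (α:ℂ) * (s:ℂ)) / (δ:ℂ)) * 1
          / ((Real.cosh (d * s) : ℂ) ^ b) := by
    unfold Iint
    congr 1
    funext s
    norm_num [hb]
  rw [hIeq, ← setIntegral_univ, ← phi_img d hd,
    integral_image_eq_integral_abs_deriv_smul measurableSet_Ioo (phi_deriv d hd) (phi_inj d hd)]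
  rw [setIntegral_congr_fun measurableSet_Ioo
    (fun t ht => aux_pt α d δ C Q hd hδ a b ha hb t ht.1 ht.2)]
  rw [MeasureTheory.integral_const_mul]
  have hbeta : (∫ t in Ioo (0:ℝ) 1, (t:ℂ)^(a-1) * (1-(t:ℂ))^(b-a-1))
      = Complex.betaIntegral a (b-a) := by
    rw [← integral_Ioc_eq_integral_Ioo, Complex.betaIntegral,
      intervalIntegral.integral_of_le zero_le_one]
  rw [hbeta]
  have hΓb : Complex.Gamma b ≠ 0 := by
    apply Complex.Gamma_ne_zero_of_re_pos
    rw [hbreval]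
    linarith
  have hG := Complex.Gamma_mul_Gamma_eq_betaIntegral hrea hreba
  rw [show a + (b - a) = b by ring] at hG
  rw [show (Q:ℂ) + Complex.I * (C:ℂ) = b - 1 by rw [hb]; ring]
  rw [show Complex.betaIntegral a (b-a)
      = Complex.Gamma (b-a) * Complex.Gamma a / Complex.Gamma b by
    rw [eq_div_iff hΓb]
    linear_combination -hG]
end

section
/- Let b ∈ ℝ and let F, H : ℝ² → ℝ be continuously differentiable functions satisfying the divergence-free relation ∂F/∂r (r,z) = −∂H/∂z (r,z) for all (r,z) ∈ ℝ², and F(0,z) = 0 for all z ∈ ℝ. Define U(r,z) := −r + b r² + r z² + ∫₀^{r} H(s,z) ds. Then U is a first integral of the planar system dr/dt = −2 r z + F(r,z), dz/dt = −1 + 2 b r + z² + H(r,z): for every differentiable curve (r,z) : I → ℝ² on an interval I satisfying these equations, the function t ↦ U(r(t), z(t)) is constant on I. -/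
open intervalIntegral Asymptotics Filter

-- partial derivative of H in z along the horizontal line through (t, x)
lemma hasDerivAt_snd_slice (H : ℝ × ℝ → ℝ) (hH : ContDiff ℝ 1 H) (t x : ℝ) :
    HasDerivAt (fun y => H (t, y)) (fderiv ℝ H (t, x) (0, 1)) x := by
  have h1 : HasDerivAt (fun y : ℝ => (t, y)) ((0 : ℝ), (1 : ℝ)) x :=
    (hasDerivAt_const x t).prodMk (hasDerivAt_id x)
  exact ((hH.differentiable one_ne_zero (t, x)).hasFDerivAt).comp_hasDerivAt x h1

lemma hasDerivAt_fst_slice (F : ℝ × ℝ → ℝ) (hF : ContDiff ℝ 1 F) (t x : ℝ) :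
    HasDerivAt (fun s => F (s, x)) (fderiv ℝ F (t, x) (1, 0)) t := by
  have h1 : HasDerivAt (fun s : ℝ => (s, x)) ((1 : ℝ), (0 : ℝ)) t :=
    (hasDerivAt_id t).prodMk (hasDerivAt_const t x)
  exact ((hF.differentiable one_ne_zero (t, x)).hasFDerivAt).comp_hasDerivAt t h1

lemma zderiv (F H : ℝ × ℝ → ℝ) (hF : ContDiff ℝ 1 F) (hH : ContDiff ℝ 1 H)
    (hdiv : ∀ p : ℝ × ℝ, fderiv ℝ F p (1, 0) = -fderiv ℝ H p (0, 1))
    (hF0 : ∀ z : ℝ, F (0, z) = 0) (p : ℝ × ℝ) :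
    HasDerivAt (fun z => ∫ s in (0:ℝ)..p.1, H (s, z)) (-F p) p.2 := by
  obtain ⟨r₀, z₀⟩ := p
  -- bound for the z-derivative on a compact neighborhood
  have hderiv_cont : Continuous fun q : ℝ × ℝ => fderiv ℝ H q (0, 1) :=
    (ContinuousLinearMap.apply ℝ ℝ ((0:ℝ), (1:ℝ))).continuous.comp
      (hH.continuous_fderiv one_ne_zero)
  obtain ⟨C, hC⟩ := (isCompact_uIcc.prod (isCompact_closedBall z₀ 1)).exists_bound_of_continuousOn
    (f := fun q : ℝ × ℝ => fderiv ℝ H q (0, 1)) hderiv_cont.continuousOn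
  have key := intervalIntegral.hasDerivAt_integral_of_dominated_loc_of_deriv_le
    (μ := MeasureTheory.volume) (a := (0:ℝ)) (b := r₀)
    (F := fun x t => H (t, x)) (F' := fun x t => fderiv ℝ H (t, x) (0, 1)) (x₀ := z₀)
    (bound := fun _ => C) (Metric.ball_mem_nhds z₀ one_pos)
    (Filter.Eventually.of_forall fun x =>
      ((hH.continuous.comp (continuous_id.prodMk continuous_const)).aestronglyMeasurable).restrict)
    ((hH.continuous.comp (continuous_id.prodMk continuous_const)).intervalIntegrable 0 r₀)
    ((hderiv_cont.comp (continuous_id.prodMk continuous_const)).aestronglyMeasurable).restrict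
    (Filter.Eventually.of_forall fun t ht x hx => hC (t, x)
      ⟨Set.uIoc_subset_uIcc ht, Metric.ball_subset_closedBall hx⟩)
    (intervalIntegrable_const)
    (Filter.Eventually.of_forall fun t _ x _ => hasDerivAt_snd_slice H hH t x)
  have hEq : (∫ t in (0:ℝ)..r₀, fderiv ℝ H (t, z₀) (0, 1)) = -F (r₀, z₀) := by
    have h1 : (∫ t in (0:ℝ)..r₀, fderiv ℝ H (t, z₀) (0, 1))
        = ∫ t in (0:ℝ)..r₀, -(fderiv ℝ F (t, z₀) (1, 0)) := by
      congr 1; ext t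
      rw [hdiv (t, z₀)]; ring
    have h2 : (∫ t in (0:ℝ)..r₀, fderiv ℝ F (t, z₀) (1, 0)) = F (r₀, z₀) - F (0, z₀) :=
      intervalIntegral.integral_eq_sub_of_hasDerivAt
        (fun t _ => hasDerivAt_fst_slice F hF t z₀)
        (((ContinuousLinearMap.apply ℝ ℝ ((1:ℝ), (0:ℝ))).continuous.comp
            ((hF.continuous_fderiv one_ne_zero).comp
              (continuous_id.prodMk continuous_const))).intervalIntegrable 0 r₀)
    rw [h1, intervalIntegral.integral_neg, h2, hF0 z₀]
    ring
  rw [hEq] at key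
  exact key.2

lemma Kfderiv (F H : ℝ × ℝ → ℝ) (hF : ContDiff ℝ 1 F) (hH : ContDiff ℝ 1 H)
    (hdiv : ∀ p : ℝ × ℝ, fderiv ℝ F p (1, 0) = -fderiv ℝ H p (0, 1))
    (hF0 : ∀ z : ℝ, F (0, z) = 0) (p : ℝ × ℝ) :
    HasFDerivAt (fun q : ℝ × ℝ => ∫ s in (0:ℝ)..q.1, H (s, q.2))
      ((H p) • (ContinuousLinearMap.fst ℝ ℝ ℝ) + (-(F p)) • (ContinuousLinearMap.snd ℝ ℝ ℝ)) p := by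
  obtain ⟨r₀, z₀⟩ := p
  rw [hasFDerivAt_iff_isLittleO_nhds_zero]
  have hHc : Continuous H := hH.continuous
  have hint : ∀ (a b c : ℝ), IntervalIntegrable (fun s => H (s, c)) MeasureTheory.volume a b :=
    fun a b c => (hHc.comp (continuous_id.prodMk continuous_const)).intervalIntegrable a b
  set A : ℝ × ℝ → ℝ := fun v =>
    (∫ s in r₀..(r₀ + v.1), H (s, z₀ + v.2)) - H (r₀, z₀) * v.1 with hA
  set B : ℝ × ℝ → ℝ := fun v =>
    (∫ s in (0:ℝ)..r₀, H (s, z₀ + v.2)) - (∫ s in (0:ℝ)..r₀, H (s, z₀)) - v.2 • (-F (r₀, z₀))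
    with hB
  have hsplit : ∀ v : ℝ × ℝ,
      (fun h : ℝ × ℝ => (∫ s in (0:ℝ)..((r₀, z₀) + h).1, H (s, ((r₀, z₀) + h).2)) -
        (∫ s in (0:ℝ)..r₀, H (s, z₀)) -
        ((H (r₀, z₀)) • (ContinuousLinearMap.fst ℝ ℝ ℝ) +
          (-(F (r₀, z₀))) • (ContinuousLinearMap.snd ℝ ℝ ℝ)) h) v = A v + B v := by
    intro v
    have hadd : (∫ s in (0:ℝ)..(r₀ + v.1), H (s, z₀ + v.2))
        = (∫ s in (0:ℝ)..r₀, H (s, z₀ + v.2)) + ∫ s in r₀..(r₀ + v.1), H (s, z₀ + v.2) :=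
      (intervalIntegral.integral_add_adjacent_intervals (hint 0 r₀ _) (hint r₀ _ _)).symm
    simp only [hA, hB, Prod.fst_add, Prod.snd_add, ContinuousLinearMap.add_apply,
      ContinuousLinearMap.coe_smul', Pi.smul_apply, ContinuousLinearMap.coe_fst',
      ContinuousLinearMap.coe_snd', smul_eq_mul]
    rw [hadd]; ring
  have hBlo : B =o[nhds 0] fun v : ℝ × ℝ => v := by
    have hz := zderiv F H hF hH hdiv hF0 (r₀, z₀)
    rw [hasDerivAt_iff_isLittleO] at hz
    have htend : Tendsto (fun v : ℝ × ℝ => z₀ + v.2) (nhds 0) (nhds z₀) := by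
      have : Tendsto (fun v : ℝ × ℝ => z₀ + v.2) (nhds 0) (nhds (z₀ + (0:ℝ×ℝ).2)) :=
        (continuous_const.add continuous_snd).tendsto 0
      simpa using this
    have := (hz.comp_tendsto htend)
    simp only [Function.comp_def, add_sub_cancel_left] at this
    calc B =o[nhds 0] fun v : ℝ × ℝ => v.2 := this
    _ =O[nhds 0] fun v : ℝ × ℝ => v :=
      (isBigO_of_le _ fun v => by simpa using norm_snd_le v)
  have hAlo : A =o[nhds 0] fun v : ℝ × ℝ => v := by
    rw [isLittleO_iff]
    intro ε hε
    obtain ⟨δ, hδ, hball⟩ :=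
      Metric.continuousAt_iff.mp (hHc.continuousAt (x := ((r₀, z₀) : ℝ × ℝ))) ε hε
    rw [Metric.eventually_nhds_iff]
    refine ⟨δ / 2, by linarith, fun v hv => ?_⟩
    simp only [dist_zero_right] at hv
    have hv1 : |v.1| ≤ ‖v‖ := by simpa using norm_fst_le v
    have hv2 : |v.2| ≤ ‖v‖ := by simpa using norm_snd_le v
    have hAv : A v = ∫ s in r₀..(r₀ + v.1), (H (s, z₀ + v.2) - H (r₀, z₀)) := by
      rw [intervalIntegral.integral_sub (hint r₀ _ _) intervalIntegrable_const]
      simp [hA, mul_comm]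
    have hbound : ∀ s ∈ Set.uIoc r₀ (r₀ + v.1), ‖H (s, z₀ + v.2) - H (r₀, z₀)‖ ≤ ε := by
      intro s hs
      have hs' : |s - r₀| ≤ |v.1| := by
        rcases Set.mem_uIoc.mp hs with h | h <;>
          · rw [abs_le]; constructor <;> [cases abs_cases v.1 <;> linarith;
              cases abs_cases v.1 <;> linarith]
      have : dist (s, z₀ + v.2) (r₀, z₀) < δ := by
        rw [Prod.dist_eq]
        simp only [Real.dist_eq, add_sub_cancel_left]
        exact max_lt (lt_of_le_of_lt (hs'.trans hv1) (by linarith))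
          (lt_of_le_of_lt hv2 (by linarith))
      exact le_of_lt (hball this)
    calc ‖A v‖ ≤ ε * |r₀ + v.1 - r₀| := by
          rw [hAv]; exact intervalIntegral.norm_integral_le_of_norm_le_const hbound
    _ ≤ ε * ‖v‖ := by
          rw [add_sub_cancel_left]
          exact mul_le_mul_of_nonneg_left hv1 (le_of_lt hε)
  have := hAlo.add hBlo
  exact this.congr' (Filter.Eventually.of_forall fun v => (hsplit v).symm) (by rfl)

theorem stmt14 (b : ℝ) (F H : ℝ × ℝ → ℝ)
    (hF : ContDiff ℝ 1 F) (hH : ContDiff ℝ 1 H)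
    (hdiv : ∀ p : ℝ × ℝ, fderiv ℝ F p (1, 0) = -fderiv ℝ H p (0, 1))
    (hF0 : ∀ z : ℝ, F (0, z) = 0)
    (U : ℝ × ℝ → ℝ)
    (hU : U = fun p : ℝ × ℝ =>
      -p.1 + b * p.1 ^ 2 + p.1 * p.2 ^ 2 + ∫ s in (0 : ℝ)..p.1, H (s, p.2)) :
    ∀ I : Set ℝ, I.OrdConnected → ∀ γ : ℝ → ℝ × ℝ,
      (∀ t ∈ I, HasDerivAt γ
        (-2 * (γ t).1 * (γ t).2 + F (γ t),
         -1 + 2 * b * (γ t).1 + (γ t).2 ^ 2 + H (γ t)) t) →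
      ∀ t₁ ∈ I, ∀ t₂ ∈ I, U (γ t₁) = U (γ t₂) := by
  intro I hI γ hγ t₁ ht₁ t₂ ht₂
  have hconv : Convex ℝ I := convex_iff_ordConnected.mpr hI
  have hU0 : ∀ t ∈ I, HasDerivAt (fun t => U (γ t)) 0 t := by
    intro t ht
    set r' : ℝ := -2 * (γ t).1 * (γ t).2 + F (γ t) with hr'
    set z' : ℝ := -1 + 2 * b * (γ t).1 + (γ t).2 ^ 2 + H (γ t) with hz'
    have hr : HasDerivAt (fun t => (γ t).1) r' t :=
      (ContinuousLinearMap.fst ℝ ℝ ℝ).hasFDerivAt.comp_hasDerivAt t (hγ t ht)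
    have hz : HasDerivAt (fun t => (γ t).2) z' t :=
      (ContinuousLinearMap.snd ℝ ℝ ℝ).hasFDerivAt.comp_hasDerivAt t (hγ t ht)
    have hK : HasDerivAt (fun t => ∫ s in (0:ℝ)..(γ t).1, H (s, (γ t).2))
        (H (γ t) * r' + (-F (γ t)) * z') t := by
      have := (Kfderiv F H hF hH hdiv hF0 (γ t)).comp_hasDerivAt t (hγ t ht)
      simp only [Function.comp_def, ContinuousLinearMap.add_apply,
        ContinuousLinearMap.coe_smul', Pi.smul_apply, ContinuousLinearMap.coe_fst',
        ContinuousLinearMap.coe_snd', smul_eq_mul] at this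
      convert this using 1
    have hsum := ((hr.neg.add ((hr.pow 2).const_mul b)).add
      (hr.mul (hz.pow 2))).add hK
    have heq : (fun t => U (γ t)) = fun t =>
        -(γ t).1 + b * (γ t).1 ^ 2 + (γ t).1 * (γ t).2 ^ 2 +
          ∫ s in (0:ℝ)..(γ t).1, H (s, (γ t).2) := by
      rw [hU]
    rw [heq]
    convert hsum using 1
    case e'_4 => rfl
    case e'_5 => rfl
    case e'_8 => rfl
    rw [hr', hz', Pi.pow_apply]
    ring
  have key := hconv.norm_image_sub_le_of_norm_hasDerivWithin_le
    (f := fun t => U (γ t)) (f' := fun _ => (0:ℝ)) (C := 0)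
    (fun x hx => (hU0 x hx).hasDerivWithinAt) (fun x _ => by simp) ht₂ ht₁
  simp only [norm_zero, zero_mul] at key
  have := norm_le_zero_iff.mp key
  linarith [sub_eq_zero.mp this]
end

section
/- Let b > 0 and let F, H : ℝ² → ℝ be continuously differentiable functions satisfying ∂F/∂r (r,z) = −∂H/∂z (r,z) for all (r,z) and F(0,z) = 0 for all z. Define R₀(w) := cosh(w)^{−2}/b and Z₀(w) := tanh(w). Then the integral ∫_{−∞}^{∞} [ F(R₀(w), Z₀(w)) + (2/b)·Z₀(w)·H(R₀(w), Z₀(w)) ] · cosh(w)^{−2} dw converges and equals 0. (This is the vanishing of the average Υ₀^{[0]} of the Melnikov function in the conservative case, Proposition 3.1.) -/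
open MeasureTheory Real Set Filter
open scoped Topology

lemma hasDerivAt_tanh' (x : ℝ) :
    HasDerivAt Real.tanh ((Real.cosh x ^ 2)⁻¹) x := by
  have h := ((Real.hasDerivAt_sinh x).div (Real.hasDerivAt_cosh x) (Real.cosh_pos x).ne')
  have e : (Real.cosh x * Real.cosh x - Real.sinh x * Real.sinh x) / Real.cosh x ^ 2
      = (Real.cosh x ^ 2)⁻¹ := by
    have h1 : Real.cosh x ^ 2 - Real.sinh x ^ 2 = 1 := Real.cosh_sq_sub_sinh_sq x
    field_simp
    nlinarith [h1]
  rw [e] at h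
  exact h.congr_of_eventuallyEq (by
    filter_upwards with y using Real.tanh_eq_sinh_div_cosh y)

lemma abs_tanh_le_one (x : ℝ) : |Real.tanh x| ≤ 1 := by
  rw [Real.tanh_eq_sinh_div_cosh, abs_div, abs_of_pos (Real.cosh_pos x),
    div_le_one (Real.cosh_pos x)]
  have h1 := Real.exp_pos x
  have h2 := Real.exp_pos (-x)
  rw [abs_le]; constructor <;> rw [Real.sinh_eq, Real.cosh_eq] <;> linarith

lemma sech_le (x : ℝ) (hx : 0 ≤ x) : (Real.cosh x ^ 2)⁻¹ ≤ 4 * Real.exp (-2 * x) := by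
  have h2 := Real.exp_pos (-x)
  have hc : Real.exp x / 2 ≤ Real.cosh x := by rw [Real.cosh_eq]; linarith
  have hc2 : (Real.exp x / 2) ^ 2 ≤ Real.cosh x ^ 2 := by
    have := Real.exp_pos x
    nlinarith
  have hpos : (0:ℝ) < (Real.exp x / 2) ^ 2 := by positivity
  calc (Real.cosh x ^ 2)⁻¹ ≤ ((Real.exp x / 2) ^ 2)⁻¹ := by
        exact inv_anti₀ hpos hc2
    _ = 4 * Real.exp (-2 * x) := by
        have e2 : Real.exp (-2*x) = (Real.exp x ^ 2)⁻¹ := by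
          rw [← Real.exp_nat_mul, ← Real.exp_neg]; norm_num
        rw [e2, div_pow, inv_div]
        norm_num [div_eq_mul_inv]
  
lemma cosh_tendsto_atTop : Tendsto Real.cosh atTop atTop := by
  apply tendsto_atTop_mono (fun x => ?_) (tendsto_exp_atTop.atTop_div_const two_pos)
  rw [Real.cosh_eq]; have := Real.exp_pos (-x); linarith

lemma cosh_tendsto_atBot : Tendsto Real.cosh atBot atTop := by
  have : Tendsto (fun x : ℝ => Real.exp (-x) / 2) atBot atTop :=
    (tendsto_exp_atTop.comp tendsto_neg_atBot_atTop).atTop_div_const two_pos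
  apply tendsto_atTop_mono (fun x => ?_) this
  rw [Real.cosh_eq]; have := Real.exp_pos x; linarith

lemma sech2_integrable : Integrable (fun w : ℝ => (Real.cosh w ^ 2)⁻¹) := by
  have hcont : Continuous (fun w : ℝ => (Real.cosh w ^ 2)⁻¹) :=
    (Real.continuous_cosh.pow 2).inv₀ (fun x => (pow_pos (Real.cosh_pos x) 2).ne')
  have hIoi : IntegrableOn (fun w : ℝ => (Real.cosh w ^ 2)⁻¹) (Ioi 0) := by
    apply integrable_of_isBigO_exp_neg (b := 2) two_pos hcont.continuousOn
    apply Asymptotics.IsBigO.of_bound 4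
    filter_upwards [eventually_ge_atTop (0:ℝ)] with x hx
    have := sech_le x hx
    rw [Real.norm_eq_abs, Real.norm_eq_abs, abs_of_pos (Real.exp_pos _)]
    rw [abs_of_pos (by positivity)]
    linarith
  have hIic : IntegrableOn (fun w : ℝ => (Real.cosh w ^ 2)⁻¹) (Iic 0) := by
    rw [← Measure.map_neg_eq_self (volume : Measure ℝ)]
    have m : MeasurableEmbedding fun x : ℝ => -x :=
      (Homeomorph.neg ℝ).measurableEmbedding
    rw [m.integrableOn_map_iff]
    simp only [Function.comp_def, Real.cosh_neg, neg_preimage, neg_Iic, neg_zero]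
    exact Iff.mpr integrableOn_Ici_iff_integrableOn_Ioi hIoi
  have := hIic.union hIoi
  rwa [Iic_union_Ioi, integrableOn_univ] at this

lemma phi_hasFDerivAt (H : ℝ × ℝ → ℝ) (hH : ContDiff ℝ 1 H) (p₀ : ℝ × ℝ) :
    HasFDerivAt (fun p : ℝ × ℝ => ∫ s in (0:ℝ)..p.1, H (s, p.2))
      ((H p₀ • ContinuousLinearMap.fst ℝ ℝ ℝ) +
       ((∫ s in (0:ℝ)..p₀.1, fderiv ℝ H (s, p₀.2) (0,1)) • ContinuousLinearMap.snd ℝ ℝ ℝ))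
      p₀ := by
  obtain ⟨r₀, z₀⟩ := p₀
  set Hz : ℝ × ℝ → ℝ := fun p => fderiv ℝ H p (0,1) with hHzdef
  have hHc : Continuous H := hH.continuous
  have hHzc : Continuous Hz :=
    (hH.continuous_fderiv one_ne_zero).clm_apply continuous_const
  have pd : ∀ s z : ℝ, HasDerivAt (fun z => H (s, z)) (Hz (s, z)) z := by
    intro s z
    have h1 : HasDerivAt (fun z : ℝ => ((s, z) : ℝ × ℝ)) ((0:ℝ), (1:ℝ)) z :=
      (hasDerivAt_const z s).prodMk (hasDerivAt_id z)
    exact ((hH.differentiable one_ne_zero (s, z)).hasFDerivAt).comp_hasDerivAt z h1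
  -- the A part
  have hcont_slice : ∀ z : ℝ, Continuous fun s => H (s, z) := fun z =>
    hHc.comp (continuous_id.prodMk continuous_const)
  have hcont_sliceHz : ∀ z : ℝ, Continuous fun s => Hz (s, z) := fun z =>
    hHzc.comp (continuous_id.prodMk continuous_const)
  obtain ⟨C, hC⟩ :=
    (isCompact_uIcc.prod (isCompact_Icc (a := z₀ - 1) (b := z₀ + 1))).exists_bound_of_continuousOn
      hHzc.continuousOn
  have hA' : HasDerivAt (fun z => ∫ s in (0:ℝ)..r₀, H (s, z))
      (∫ s in (0:ℝ)..r₀, Hz (s, z₀)) z₀ := by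
    refine (intervalIntegral.hasDerivAt_integral_of_dominated_loc_of_deriv_le
      (F := fun z s => H (s, z)) (F' := fun z s => Hz (s, z)) (bound := fun _ => C)
      (Metric.ball_mem_nhds z₀ one_pos) ?_ ?_ ?_ ?_ ?_ ?_).2
    · exact Eventually.of_forall fun x => ((hcont_slice x).aestronglyMeasurable).restrict
    · exact (hcont_slice z₀).intervalIntegrable _ _
    · exact ((hcont_sliceHz z₀).aestronglyMeasurable).restrict
    · refine ae_of_all _ fun t ht x hx => hC (t, x) ?_
      refine ⟨uIoc_subset_uIcc ht, ?_⟩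
      rw [Metric.mem_ball, Real.dist_eq] at hx
      constructor <;> [linarith [abs_le.1 hx.le] ; linarith [(abs_le.1 hx.le).2]]
    · exact intervalIntegrable_const
    · exact ae_of_all _ fun t ht x hx => pd t x
  have hA : HasFDerivAt (fun p : ℝ × ℝ => ∫ s in (0:ℝ)..r₀, H (s, p.2))
      ((∫ s in (0:ℝ)..r₀, Hz (s, z₀)) • ContinuousLinearMap.snd ℝ ℝ ℝ) (r₀, z₀) :=
    by have := hA'.comp_hasFDerivAt (f := Prod.snd) (f' := ContinuousLinearMap.snd ℝ ℝ ℝ) (r₀, z₀) hasFDerivAt_snd; exact this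
  -- the B part
  have hB : HasFDerivAt (fun p : ℝ × ℝ => ∫ s in r₀..p.1, H (s, p.2))
      (H (r₀, z₀) • ContinuousLinearMap.fst ℝ ℝ ℝ) (r₀, z₀) := by
    refine HasFDerivAt.of_isLittleO (Asymptotics.isLittleO_iff.2 fun ε hε => ?_)
    obtain ⟨δ, hδ, hδ'⟩ := Metric.continuousAt_iff.1 hHc.continuousAt ε hε
    rw [Metric.eventually_nhds_iff]
    refine ⟨δ, hδ, fun p hp => ?_⟩
    have hkey : ∀ s ∈ Set.uIoc r₀ p.1, ‖H (s, p.2) - H (r₀, z₀)‖ ≤ ε := by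
      intro s hs
      have hs' : |s - r₀| ≤ |p.1 - r₀| := by
        rcases le_total r₀ p.1 with h | h
        · rw [Set.uIoc_of_le h] at hs
          rw [abs_of_nonneg (by linarith [hs.1.le]), abs_of_nonneg (by linarith)]
          linarith [hs.2]
        · rw [Set.uIoc_of_ge h] at hs
          rw [abs_of_nonpos (by linarith [hs.2]), abs_of_nonpos (by linarith)]
          linarith [hs.1.le]
      have hd : dist (s, p.2) ((r₀, z₀) : ℝ × ℝ) < δ := by
        rw [Prod.dist_eq] at hp ⊢
        simp only [Real.dist_eq] at hp ⊢
        exact lt_of_le_of_lt (max_le_max hs' le_rfl) hp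
      exact (hδ' hd).le
    have hint : IntervalIntegrable (fun s => H (s, p.2)) volume r₀ p.1 :=
      (hcont_slice p.2).intervalIntegrable _ _
    have e1 : (∫ s in r₀..p.1, H (s, p.2)) - (∫ s in r₀..r₀, H (s, (r₀, z₀).2)) -
        (H (r₀, z₀) • ContinuousLinearMap.fst ℝ ℝ ℝ) (p - (r₀, z₀))
        = ∫ s in r₀..p.1, (H (s, p.2) - H (r₀, z₀)) := by
      rw [intervalIntegral.integral_same, intervalIntegral.integral_sub hint
        intervalIntegrable_const, intervalIntegral.integral_const]
      simp only [ContinuousLinearMap.smul_apply, ContinuousLinearMap.coe_fst',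
        Prod.fst_sub, smul_eq_mul]
      ring
    calc ‖(∫ s in r₀..p.1, H (s, p.2)) - (∫ s in r₀..r₀, H (s, (r₀, z₀).2)) -
        (H (r₀, z₀) • ContinuousLinearMap.fst ℝ ℝ ℝ) (p - (r₀, z₀))‖
        = ‖∫ s in r₀..p.1, (H (s, p.2) - H (r₀, z₀))‖ := by rw [e1]
      _ ≤ ε * |p.1 - r₀| := intervalIntegral.norm_integral_le_of_norm_le_const hkey
      _ ≤ ε * ‖p - (r₀, z₀)‖ := by
          refine mul_le_mul_of_nonneg_left ?_ hε.le
          have := norm_fst_le (p - (r₀, z₀))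
          simpa [Real.norm_eq_abs] using this
  have hsplit : (fun p : ℝ × ℝ => ∫ s in (0:ℝ)..p.1, H (s, p.2))
      = fun p : ℝ × ℝ => (∫ s in (0:ℝ)..r₀, H (s, p.2)) + ∫ s in r₀..p.1, H (s, p.2) :=
    funext fun p => (intervalIntegral.integral_add_adjacent_intervals
      ((hcont_slice p.2).intervalIntegrable _ _) ((hcont_slice p.2).intervalIntegrable _ _)).symm
  rw [hsplit]
  exact (hA.add hB).congr_fderiv (by abel)

lemma ftc_aux (F H : ℝ × ℝ → ℝ) (hF : ContDiff ℝ 1 F) (hH : ContDiff ℝ 1 H)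
    (hdiv : ∀ p : ℝ × ℝ, fderiv ℝ F p (1, 0) = -fderiv ℝ H p (0, 1))
    (hF0 : ∀ z : ℝ, F (0, z) = 0) (r z : ℝ) :
    (∫ s in (0:ℝ)..r, fderiv ℝ H (s, z) (0, 1)) = -F (r, z) := by
  have hFrc : Continuous fun s : ℝ => fderiv ℝ F (s, z) (1, 0) :=
    ((hF.continuous_fderiv one_ne_zero).clm_apply continuous_const).comp
      (continuous_id.prodMk continuous_const)
  have pd : ∀ s : ℝ, HasDerivAt (fun s => F (s, z)) (fderiv ℝ F (s, z) (1, 0)) s := by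
    intro s
    have h1 : HasDerivAt (fun s : ℝ => ((s, z) : ℝ × ℝ)) ((1:ℝ), (0:ℝ)) s :=
      (hasDerivAt_id s).prodMk (hasDerivAt_const s z)
    exact ((hF.differentiable one_ne_zero (s, z)).hasFDerivAt).comp_hasDerivAt s h1
  have h2 : (∫ s in (0:ℝ)..r, fderiv ℝ F (s, z) (1, 0)) = F (r, z) - F (0, z) :=
    intervalIntegral.integral_eq_sub_of_hasDerivAt (fun s _ => pd s)
      (hFrc.intervalIntegrable _ _)
  have h3 : (∫ s in (0:ℝ)..r, fderiv ℝ H (s, z) (0, 1))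
      = -∫ s in (0:ℝ)..r, fderiv ℝ F (s, z) (1, 0) := by
    rw [← intervalIntegral.integral_neg]
    congr 1
    funext s
    rw [hdiv (s, z), neg_neg]
  rw [h3, h2, hF0 z]
  ring

theorem stmt15 (b : ℝ) (hb : 0 < b) (F H : ℝ × ℝ → ℝ)
    (hF : ContDiff ℝ 1 F) (hH : ContDiff ℝ 1 H)
    (hdiv : ∀ p : ℝ × ℝ, fderiv ℝ F p (1, 0) = -fderiv ℝ H p (0, 1))
    (hF0 : ∀ z : ℝ, F (0, z) = 0) :
    Integrable (fun w : ℝ =>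
      (F (((Real.cosh w) ^ 2)⁻¹ / b, Real.tanh w)
        + (2 / b) * Real.tanh w * H (((Real.cosh w) ^ 2)⁻¹ / b, Real.tanh w))
        * ((Real.cosh w) ^ 2)⁻¹) ∧
    (∫ w : ℝ,
      (F (((Real.cosh w) ^ 2)⁻¹ / b, Real.tanh w)
        + (2 / b) * Real.tanh w * H (((Real.cosh w) ^ 2)⁻¹ / b, Real.tanh w))
        * ((Real.cosh w) ^ 2)⁻¹) = 0 := by
  set R : ℝ → ℝ := fun w => ((Real.cosh w) ^ 2)⁻¹ / b with hRdef
  set f : ℝ → ℝ := fun w =>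
      (F (R w, Real.tanh w) + (2 / b) * Real.tanh w * H (R w, Real.tanh w))
        * ((Real.cosh w) ^ 2)⁻¹ with hfdef
  set G : ℝ → ℝ := fun w => ∫ s in (0:ℝ)..(R w), H (s, Real.tanh w) with hGdef
  -- basic facts about R
  have hRnonneg : ∀ w, 0 ≤ R w := fun w => by positivity
  have hRle : ∀ w, R w ≤ 1 / b := by
    intro w
    rw [hRdef]
    have h1 : (Real.cosh w ^ 2)⁻¹ ≤ 1 := inv_le_one_of_one_le₀ (by nlinarith [Real.one_le_cosh w])
    calc (Real.cosh w ^ 2)⁻¹ / b ≤ 1 / b := by gcongr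
      _ = 1 / b := rfl
  -- derivative of G
  have hG : ∀ w, HasDerivAt G (-(f w)) w := by
    intro w
    have hch : Real.cosh w ≠ 0 := (Real.cosh_pos w).ne'
    have hc2 : HasDerivAt (fun w => Real.cosh w ^ 2)
        ((2:ℕ) * Real.cosh w ^ 1 * Real.sinh w) w := (Real.hasDerivAt_cosh w).pow 2
    have hinv : HasDerivAt (fun w => (Real.cosh w ^ 2)⁻¹)
        (-((2:ℕ) * Real.cosh w ^ 1 * Real.sinh w) / (Real.cosh w ^ 2) ^ 2) w :=
      hc2.inv (by positivity)
    have hR' : HasDerivAt R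
        (-((2:ℕ) * Real.cosh w ^ 1 * Real.sinh w) / (Real.cosh w ^ 2) ^ 2 / b) w :=
      hinv.div_const b
    have hγ : HasDerivAt (fun w => ((R w, Real.tanh w) : ℝ × ℝ))
        ((-((2:ℕ) * Real.cosh w ^ 1 * Real.sinh w) / (Real.cosh w ^ 2) ^ 2 / b,
          (Real.cosh w ^ 2)⁻¹)) w := hR'.prodMk (hasDerivAt_tanh' w)
    have hΦ := phi_hasFDerivAt H hH (R w, Real.tanh w)
    have hcomp := hΦ.comp_hasDerivAt w hγ
    have hval : ((H (R w, Real.tanh w) • ContinuousLinearMap.fst ℝ ℝ ℝ) +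
        ((∫ s in (0:ℝ)..(R w), fderiv ℝ H (s, Real.tanh w) (0,1)) •
          ContinuousLinearMap.snd ℝ ℝ ℝ))
        ((-((2:ℕ) * Real.cosh w ^ 1 * Real.sinh w) / (Real.cosh w ^ 2) ^ 2 / b,
          (Real.cosh w ^ 2)⁻¹)) = -(f w) := by
      rw [ftc_aux F H hF hH hdiv hF0]
      simp only [ContinuousLinearMap.add_apply, ContinuousLinearMap.smul_apply,
        ContinuousLinearMap.coe_fst', ContinuousLinearMap.coe_snd', smul_eq_mul, hfdef]
      rw [Real.tanh_eq_sinh_div_cosh, hRdef]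
      field_simp
      ring
    rw [hval] at hcomp
    exact hcomp
  -- boundedness constants
  obtain ⟨C, hC⟩ := ((isCompact_Icc (a := (0:ℝ)) (b := 1/b)).prod
    (isCompact_Icc (a := (-1:ℝ)) (b := 1))).exists_bound_of_continuousOn hF.continuous.continuousOn
  obtain ⟨D, hD⟩ := ((isCompact_Icc (a := (0:ℝ)) (b := 1/b)).prod
    (isCompact_Icc (a := (-1:ℝ)) (b := 1))).exists_bound_of_continuousOn hH.continuous.continuousOn
  have hD0 : 0 ≤ D := le_trans (norm_nonneg _) (hD (0, 0) (by
    constructor <;> constructor <;> simp [le_of_lt hb, one_div] <;> positivity))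
  have hmem : ∀ w, ((R w, Real.tanh w) : ℝ × ℝ) ∈
      Set.Icc (0:ℝ) (1/b) ×ˢ Set.Icc (-1:ℝ) 1 := by
    intro w
    exact ⟨⟨hRnonneg w, hRle w⟩, abs_le.1 (abs_tanh_le_one w)⟩
  have htanhc : Continuous Real.tanh := by
    have : Continuous fun x => Real.sinh x / Real.cosh x :=
      Real.continuous_sinh.div Real.continuous_cosh fun x => (Real.cosh_pos x).ne'
    simpa only [← Real.tanh_eq_sinh_div_cosh] using this
  -- continuity of f
  have hcontf : Continuous f := by
    apply Continuous.mul ?_ ((Real.continuous_cosh.pow 2).inv₀ (fun x => (pow_pos (Real.cosh_pos x) 2).ne'))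
    have hγc : Continuous fun w => ((R w, Real.tanh w) : ℝ × ℝ) :=
      (((Real.continuous_cosh.pow 2).inv₀ (fun x => (pow_pos (Real.cosh_pos x) 2).ne')).div_const b).prodMk
        htanhc
    exact (hF.continuous.comp hγc).add
      ((continuous_const.mul htanhc).mul (hH.continuous.comp hγc))
  -- integrability of f
  have hint : Integrable f := by
    refine ((sech2_integrable.const_mul (C + 2/b * D)).mono'
      hcontf.aestronglyMeasurable (ae_of_all _ fun w => ?_))
    have h1 := hC _ (hmem w)
    have h2 := hD _ (hmem w)
    have h3 := abs_tanh_le_one w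
    have h4 : (0:ℝ) ≤ (Real.cosh w ^ 2)⁻¹ := by positivity
    have h5 : (0:ℝ) < 2/b := by positivity
    simp only [Real.norm_eq_abs] at h1 h2 ⊢
    rw [hfdef, abs_mul, abs_of_nonneg h4]
    have : |F (R w, Real.tanh w) + 2 / b * Real.tanh w * H (R w, Real.tanh w)|
        ≤ C + 2/b * D := by
      refine (abs_add_le _ _).trans ?_
      have : |2 / b * Real.tanh w * H (R w, Real.tanh w)| ≤ 2/b * D := by
        rw [abs_mul, abs_mul, abs_of_pos h5]
        calc 2/b * |Real.tanh w| * |H (R w, Real.tanh w)|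
            ≤ 2/b * 1 * D := by
              apply mul_le_mul (by nlinarith) h2 (abs_nonneg _) (by positivity)
          _ = 2/b * D := by ring
      linarith
    exact mul_le_mul_of_nonneg_right this h4
  refine ⟨hint, ?_⟩
  -- limits of G at ±∞
  have hGbound : ∀ w, ‖G w‖ ≤ D * R w := by
    intro w
    have hkey : ∀ s ∈ Set.uIoc (0:ℝ) (R w), ‖H (s, Real.tanh w)‖ ≤ D := by
      intro s hs
      rw [Set.uIoc_of_le (hRnonneg w)] at hs
      exact hD (s, Real.tanh w) ⟨⟨hs.1.le, hs.2.trans (hRle w)⟩,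
        abs_le.1 (abs_tanh_le_one w)⟩
    have := intervalIntegral.norm_integral_le_of_norm_le_const hkey
    rwa [sub_zero, abs_of_nonneg (hRnonneg w)] at this
  have hcosh2_top : Tendsto (fun w => Real.cosh w ^ 2) atTop atTop := by
    apply tendsto_atTop_mono (fun w => ?_) cosh_tendsto_atTop
    nlinarith [Real.one_le_cosh w]
  have hcosh2_bot : Tendsto (fun w => Real.cosh w ^ 2) atBot atTop := by
    apply tendsto_atTop_mono (fun w => ?_) cosh_tendsto_atBot
    nlinarith [Real.one_le_cosh w]
  have hRtop : Tendsto R atTop (𝓝 0) := by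
    have := hcosh2_top.inv_tendsto_atTop.div_const b
    simpa using this
  have hRbot : Tendsto R atBot (𝓝 0) := by
    have := hcosh2_bot.inv_tendsto_atTop.div_const b
    simpa using this
  have hGtop : Tendsto G atTop (𝓝 0) := by
    apply squeeze_zero_norm hGbound
    simpa using hRtop.const_mul D
  have hGbot : Tendsto G atBot (𝓝 0) := by
    apply squeeze_zero_norm hGbound
    simpa using hRbot.const_mul D
  -- interval integrals
  have heq : ∀ T : ℝ, (∫ w in (-T)..T, f w) = G (-T) - G T := by
    intro T
    have := intervalIntegral.integral_eq_sub_of_hasDerivAt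
      (f := fun w => -(G w)) (f' := f) (a := -T) (b := T)
      (fun w _ => by have := (hG w).neg; rw [neg_neg] at this; exact this) hint.intervalIntegrable
    rw [this]; ring
  have htend1 : Tendsto (fun T : ℝ => ∫ w in (-T)..T, f w) atTop (𝓝 (∫ w, f w)) :=
    intervalIntegral_tendsto_integral hint tendsto_neg_atTop_atBot tendsto_id
  have htend2 : Tendsto (fun T : ℝ => ∫ w in (-T)..T, f w) atTop (𝓝 0) := by
    simp only [heq]
    have := (hGbot.comp tendsto_neg_atTop_atBot).sub hGtop
    simpa using this
  exact tendsto_nhds_unique htend1 htend2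
end

section
/- Let α, δ, d > 0, c ∈ ℝ, T₀ ∈ ℝ, let n be a real number with n ≥ 1, and let l ∈ ℤ. There exists a constant M > 0, depending only on n, d and T₀ (in particular independent of α, c, δ, l and of φ), such that the following holds: for every continuous φ : (−∞, T₀] → ℂ and every N ≥ 0 with |φ(w)| ≤ N·cosh(d w)^{−n} for all w ≤ T₀, the function y(v) := cosh(d v)^{2/d} · ∫_{−∞}^{v} e^{−i l (η(w) − η(v))/δ} · φ(w) · cosh(d w)^{−2/d} dw is well defined for all v ≤ T₀ (the integral converges absolutely) and satisfies |y(v)| ≤ M·N·cosh(d v)^{−(n−1)} for all v ≤ T₀. -/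
open MeasureTheory

open Real Set Filter Topology

lemma exp_neg_half_le_cosh (x : ℝ) : Real.exp (-x) / 2 ≤ Real.cosh x := by
  rw [Real.cosh_eq]; have := (Real.exp_pos x).le; linarith

lemma cosh_le_exp_abs (x : ℝ) : Real.cosh x ≤ Real.exp |x| := by
  rw [Real.cosh_eq]
  have h1 := Real.exp_le_exp.2 (le_abs_self x)
  have h2 := Real.exp_le_exp.2 (neg_le_abs x)
  linarith

lemma integrableOn_exp_mul_Iic' {b : ℝ} (hb : 0 < b) (v : ℝ) :
    IntegrableOn (fun x => Real.exp (b * x)) (Set.Iic v) := by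
  have hc : Continuous fun x : ℝ => Real.exp (b * x) :=
    Real.continuous_exp.comp (continuous_const.mul continuous_id)
  have hder : ∀ x : ℝ, HasDerivAt (fun x => Real.exp (b * x) / b) (Real.exp (b * x)) x := by
    intro x
    have h1 : HasDerivAt (fun x : ℝ => b * x) b x := by
      simpa using (hasDerivAt_id x).const_mul b
    have h2 : HasDerivAt (fun x => Real.exp (b * x)) (Real.exp (b * x) * b) x :=
      (Real.hasDerivAt_exp (b * x)).comp x h1
    have := h2.div_const b
    simpa [mul_div_assoc, div_self hb.ne'] using this
  have hInt : ∀ y : ℝ, y ≤ v → (∫ x in y..v, Real.exp (b * x)) =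
      Real.exp (b * v) / b - Real.exp (b * y) / b := by
    intro y hy
    exact intervalIntegral.integral_eq_sub_of_hasDerivAt (fun x _ => hder x)
      (hc.intervalIntegrable _ _)
  refine integrableOn_Iic_of_intervalIntegral_norm_bounded (Real.exp (b * v) / b) v
    (fun y => (hc.intervalIntegrable _ _).1) tendsto_id ?_
  filter_upwards [Iic_mem_atBot v] with y (hy : y ≤ v)
  have hnorm : (∫ x in y..v, ‖Real.exp (b * x)‖) = ∫ x in y..v, Real.exp (b * x) := by
    simp [Real.norm_eq_abs, abs_of_pos (Real.exp_pos _)]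
  simp only [id]
  rw [hnorm, hInt y hy]
  have := (Real.exp_pos (b * y)).le
  have : 0 ≤ Real.exp (b * y) / b := by positivity
  linarith

lemma integral_exp_mul_Iic' {b : ℝ} (hb : 0 < b) (v : ℝ) :
    (∫ x in Set.Iic v, Real.exp (b * x)) = Real.exp (b * v) / b := by
  refine tendsto_nhds_unique
    (intervalIntegral_tendsto_integral_Iic v (integrableOn_exp_mul_Iic' hb v) tendsto_id) ?_
  have hder : ∀ x : ℝ, HasDerivAt (fun x => Real.exp (b * x) / b) (Real.exp (b * x)) x := by
    intro x
    have h1 : HasDerivAt (fun x : ℝ => b * x) b x := by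
      simpa using (hasDerivAt_id x).const_mul b
    have h2 : HasDerivAt (fun x => Real.exp (b * x)) (Real.exp (b * x) * b) x :=
      (Real.hasDerivAt_exp (b * x)).comp x h1
    have := h2.div_const b
    simpa [mul_div_assoc, div_self hb.ne'] using this
  have hc : Continuous fun x : ℝ => Real.exp (b * x) :=
    Real.continuous_exp.comp (continuous_const.mul continuous_id)
  have hInt : ∀ y : ℝ, (∫ x in y..v, Real.exp (b * x)) =
      Real.exp (b * v) / b - Real.exp (b * y) / b := fun y =>
    intervalIntegral.integral_eq_sub_of_hasDerivAt (fun x _ => hder x)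
      (hc.intervalIntegrable _ _)
  simp_rw [id, hInt]
  have h0 : Tendsto (fun y : ℝ => Real.exp (b * y) / b) atBot (𝓝 0) := by
    have : Tendsto (fun y : ℝ => b * y) atBot atBot :=
      tendsto_id.const_mul_atBot hb
    simpa using (Real.tendsto_exp_atBot.comp this).div_const b
  simpa using (tendsto_const_nhds.sub h0)

lemma cosh_rpow_neg_le {s : ℝ} (hs : 0 < s) (x : ℝ) :
    Real.cosh x ^ (-s) ≤ 2 ^ s * Real.exp (s * x) := by
  have h2 : (0:ℝ) < Real.exp (-x) / 2 := by positivity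
  calc Real.cosh x ^ (-s) ≤ (Real.exp (-x) / 2) ^ (-s) :=
        Real.rpow_le_rpow_of_nonpos h2 (exp_neg_half_le_cosh x) (by linarith)
    _ = 2 ^ s * Real.exp (s * x) := by
        rw [Real.div_rpow (Real.exp_pos _).le (by norm_num), ← Real.exp_mul,
          Real.rpow_neg (by norm_num : (0:ℝ) ≤ 2), div_eq_mul_inv, inv_inv]
        have : -x * -s = s * x := by ring
        rw [this]; ring


theorem stmt18 (d T₀ n : ℝ) (hd : 0 < d) (hn : 1 ≤ n) :
    ∃ M > (0 : ℝ), ∀ α δ c : ℝ, 0 < α → 0 < δ →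
      ∀ l : ℤ, ∀ φ : ℝ → ℂ, ContinuousOn φ (Set.Iic T₀) →
      ∀ N : ℝ, 0 ≤ N →
        (∀ w : ℝ, w ≤ T₀ → ‖φ w‖ ≤ N * Real.cosh (d * w) ^ (-n)) →
        ∀ v : ℝ, v ≤ T₀ →
          IntegrableOn (fun w : ℝ =>
            Complex.exp (-Complex.I * (l : ℂ)
                * (((etaF α δ c d w - etaF α δ c d v) / δ : ℝ) : ℂ))
              * φ w / ((Real.cosh (d * w) ^ ((2 : ℝ) / d) : ℝ) : ℂ)) (Set.Iic v) ∧
          ‖(Real.cosh (d * v) ^ ((2 : ℝ) / d)) •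
              ∫ w in Set.Iic v,
                Complex.exp (-Complex.I * (l : ℂ)
                    * (((etaF α δ c d w - etaF α δ c d v) / δ : ℝ) : ℂ))
                  * φ w / ((Real.cosh (d * w) ^ ((2 : ℝ) / d) : ℝ) : ℂ)‖
            ≤ M * N * Real.cosh (d * v) ^ (-(n - 1)) := by
  have hd2 : (0:ℝ) < 2 / d := by positivity
  set s : ℝ := n + 2 / d with hs_def
  have hs1 : 1 ≤ s := by simp only [hs_def]; linarith
  have hs : 0 < s := by linarith
  set b : ℝ := s * d with hb_def
  have hb : 0 < b := mul_pos hs hd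
  set C : ℝ := Real.exp ((2 * s - 1) * d * max T₀ 0) with hC_def
  have hC : 0 < C := Real.exp_pos _
  refine ⟨2 ^ s * C / b, by positivity, ?_⟩
  intro α δ c hα hδ l φ hφ N hN hφb v hv
  have he : ∀ x : ℝ, ‖Complex.exp (-Complex.I * (l : ℂ) * (x : ℂ))‖ = 1 := by
    intro x
    rw [Complex.norm_exp]
    simp [Complex.mul_re]
  -- pointwise bound
  have hgb : ∀ w : ℝ, w ≤ T₀ →
      ‖Complex.exp (-Complex.I * (l : ℂ)
          * (((etaF α δ c d w - etaF α δ c d v) / δ : ℝ) : ℂ))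
        * φ w / ((Real.cosh (d * w) ^ ((2 : ℝ) / d) : ℝ) : ℂ)‖
        ≤ N * 2 ^ s * Real.exp (b * w) := by
    intro w hw
    have hcw : 0 < Real.cosh (d * w) := Real.cosh_pos _
    have hrp : 0 < Real.cosh (d * w) ^ ((2:ℝ)/d) := Real.rpow_pos_of_pos hcw _
    rw [norm_div, norm_mul, he, one_mul, Complex.norm_real, Real.norm_eq_abs,
      abs_of_pos hrp]
    calc ‖φ w‖ / Real.cosh (d * w) ^ ((2:ℝ)/d)
        ≤ (N * Real.cosh (d * w) ^ (-n)) / Real.cosh (d * w) ^ ((2:ℝ)/d) := by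
          gcongr; exact hφb w hw
      _ = N * Real.cosh (d * w) ^ (-s) := by
          rw [div_eq_mul_inv, ← Real.rpow_neg hcw.le, mul_assoc, ← Real.rpow_add hcw]
          congr 1
          rw [hs_def]; ring_nf
      _ ≤ N * (2 ^ s * Real.exp (s * (d * w))) :=
          mul_le_mul_of_nonneg_left (cosh_rpow_neg_le hs _) hN
      _ = N * 2 ^ s * Real.exp (b * w) := by
          rw [hb_def, mul_assoc (s) d w]; ring
  have hdom : IntegrableOn (fun w => N * 2 ^ s * Real.exp (b * w)) (Set.Iic v) :=
    (integrableOn_exp_mul_Iic' hb v).const_mul _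
  have hcont : ContinuousOn (fun w : ℝ =>
      Complex.exp (-Complex.I * (l : ℂ)
          * (((etaF α δ c d w - etaF α δ c d v) / δ : ℝ) : ℂ))
        * φ w / ((Real.cosh (d * w) ^ ((2 : ℝ) / d) : ℝ) : ℂ)) (Set.Iic v) := by
    have h1 : Continuous fun w => etaF α δ c d w := by
      unfold etaF
      exact (continuous_const.mul continuous_id).add (continuous_const.mul
        ((Real.continuous_cosh.comp (continuous_const.mul continuous_id)).log
          fun x => (Real.cosh_pos _).ne'))
    have he_cont : Continuous fun w : ℝ => Complex.exp (-Complex.I * (l : ℂ)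
        * (((etaF α δ c d w - etaF α δ c d v) / δ : ℝ) : ℂ)) :=
      Complex.continuous_exp.comp (continuous_const.mul
        (Complex.continuous_ofReal.comp ((h1.sub continuous_const).div_const δ)))
    have hden : Continuous fun w : ℝ => ((Real.cosh (d * w) ^ ((2:ℝ)/d) : ℝ) : ℂ) :=
      Complex.continuous_ofReal.comp
        ((Real.continuous_cosh.comp (continuous_const.mul continuous_id)).rpow_const
          fun x => Or.inl (Real.cosh_pos _).ne')
    exact ((he_cont.continuousOn.mul (hφ.mono (Set.Iic_subset_Iic.2 hv))).div
      hden.continuousOn fun x _ => Complex.ofReal_ne_zero.2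
        (Real.rpow_pos_of_pos (Real.cosh_pos _) _).ne')
  have hInt : IntegrableOn (fun w : ℝ =>
      Complex.exp (-Complex.I * (l : ℂ)
          * (((etaF α δ c d w - etaF α δ c d v) / δ : ℝ) : ℂ))
        * φ w / ((Real.cosh (d * w) ^ ((2 : ℝ) / d) : ℝ) : ℂ)) (Set.Iic v) := by
    refine Integrable.mono' hdom (hcont.aestronglyMeasurable measurableSet_Iic) ?_
    filter_upwards [ae_restrict_mem measurableSet_Iic] with w hw
    exact hgb w (le_trans hw hv)
  refine ⟨hInt, ?_⟩
  have hIb : ‖∫ w in Set.Iic v,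
      Complex.exp (-Complex.I * (l : ℂ)
          * (((etaF α δ c d w - etaF α δ c d v) / δ : ℝ) : ℂ))
        * φ w / ((Real.cosh (d * w) ^ ((2 : ℝ) / d) : ℝ) : ℂ)‖
        ≤ N * 2 ^ s * (Real.exp (b * v) / b) := by
    have h1 := norm_integral_le_of_norm_le hdom
      (by filter_upwards [ae_restrict_mem measurableSet_Iic] with w hw
          exact hgb w (le_trans hw hv))
    refine h1.trans ?_
    rw [MeasureTheory.integral_const_mul, integral_exp_mul_Iic' hb v]
  have hcv : 0 < Real.cosh (d * v) := Real.cosh_pos _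
  have hrpv : 0 < Real.cosh (d * v) ^ ((2:ℝ)/d) := Real.rpow_pos_of_pos hcv _
  have key : Real.cosh (d * v) ^ ((2:ℝ)/d) * Real.exp (b * v)
      ≤ C * Real.cosh (d * v) ^ (-(n - 1)) := by
    have hc1 : Real.cosh (d * v) ^ (s - 1) ≤ Real.exp ((s - 1) * |d * v|) := by
      calc Real.cosh (d * v) ^ (s - 1)
          ≤ Real.exp |d * v| ^ (s - 1) :=
            Real.rpow_le_rpow hcv.le (cosh_le_exp_abs _) (by linarith)
        _ = Real.exp ((s - 1) * |d * v|) := by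
            rw [← Real.exp_mul]; ring_nf
    have h1 : Real.exp (b * v) * Real.cosh (d * v) ^ (s - 1) ≤ C := by
      calc Real.exp (b * v) * Real.cosh (d * v) ^ (s - 1)
          ≤ Real.exp (b * v) * Real.exp ((s - 1) * |d * v|) :=
            mul_le_mul_of_nonneg_left hc1 (Real.exp_pos _).le
        _ = Real.exp (b * v + (s - 1) * |d * v|) := (Real.exp_add _ _).symm
        _ ≤ C := by
            rw [hC_def]
            apply Real.exp_le_exp.2
            rcases le_or_gt v 0 with h | h
            · rw [abs_of_nonpos (by have := mul_le_mul_of_nonneg_left h hd.le; simpa using this)]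
              have hm : (0:ℝ) ≤ max T₀ 0 := le_max_right T₀ 0
              have h2 : d * v ≤ 0 := by
                have := mul_le_mul_of_nonneg_left h hd.le; simpa using this
              have h3 : (0:ℝ) ≤ (2 * s - 1) * d * max T₀ 0 :=
                mul_nonneg (mul_nonneg (by linarith) hd.le) hm
              rw [hb_def]; nlinarith
            · rw [abs_of_pos (mul_pos hd h)]
              have hm : v ≤ max T₀ 0 := le_trans hv (le_max_left T₀ 0)
              have h3 : (2 * s - 1) * d * v ≤ (2 * s - 1) * d * max T₀ 0 :=
                mul_le_mul_of_nonneg_left hm (mul_nonneg (by linarith) hd.le)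
              rw [hb_def]; nlinarith
    have hsplit : Real.cosh (d * v) ^ ((2:ℝ)/d)
        = Real.cosh (d * v) ^ (s - 1) * Real.cosh (d * v) ^ (-(n - 1)) := by
      rw [← Real.rpow_add hcv]
      congr 1
      rw [hs_def]; ring
    rw [hsplit]
    calc Real.cosh (d * v) ^ (s - 1) * Real.cosh (d * v) ^ (-(n - 1)) * Real.exp (b * v)
        = (Real.exp (b * v) * Real.cosh (d * v) ^ (s - 1)) * Real.cosh (d * v) ^ (-(n - 1)) := by
          ring
      _ ≤ C * Real.cosh (d * v) ^ (-(n - 1)) :=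
          mul_le_mul_of_nonneg_right h1 (Real.rpow_nonneg hcv.le _)
  rw [norm_smul, Real.norm_eq_abs, abs_of_pos hrpv]
  calc Real.cosh (d * v) ^ ((2:ℝ)/d) * ‖∫ w in Set.Iic v,
        Complex.exp (-Complex.I * (l : ℂ)
            * (((etaF α δ c d w - etaF α δ c d v) / δ : ℝ) : ℂ))
          * φ w / ((Real.cosh (d * w) ^ ((2 : ℝ) / d) : ℝ) : ℂ)‖
      ≤ Real.cosh (d * v) ^ ((2:ℝ)/d) * (N * 2 ^ s * (Real.exp (b * v) / b)) :=
        mul_le_mul_of_nonneg_left hIb hrpv.le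
    _ = (N * 2 ^ s / b) * (Real.cosh (d * v) ^ ((2:ℝ)/d) * Real.exp (b * v)) := by ring
    _ ≤ (N * 2 ^ s / b) * (C * Real.cosh (d * v) ^ (-(n - 1))) :=
        mul_le_mul_of_nonneg_left key (by positivity)
    _ = 2 ^ s * C / b * N * Real.cosh (d * v) ^ (-(n - 1)) := by ring
end
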